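/- arXiv:1801.00331 — 4 statements merged into one kernel-verified Lean document; each statement's English description precedes it below -/
import Mathlib

section
/- If A is a normal bounded operator on a Hilbert space, then 2|A| ≥ |Re A| + |Im A|, where Re A = (A + A*)/2, Im A = (A - A*)/(2i), and |T| = (T*T)^{1/2}. -/
open scoped InnerProductSpace

/-- The absolute value `|T| = (T*T)^{1/2}` of a bounded operator. -/
noncomputable def opAbs {H : Type*} [NormedAddCommGroup H] [InnerProductSpace ℂ H]
    [CompleteSpace H] (T : H →L[ℂ] H) : H →L[ℂ] H :=
  CFC.sqrt (star T * T)

/-- The real part `Re A = (A + A*)/2`. -/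
noncomputable def opRe {H : Type*} [NormedAddCommGroup H] [InnerProductSpace ℂ H]
    [CompleteSpace H] (A : H →L[ℂ] H) : H →L[ℂ] H :=
  (1 / 2 : ℂ) • (A + star A)

/-- The imaginary part `Im A = (A - A*)/(2i)`. -/
noncomputable def opIm {H : Type*} [NormedAddCommGroup H] [InnerProductSpace ℂ H]
    [CompleteSpace H] (A : H →L[ℂ] H) : H →L[ℂ] H :=
  (1 / (2 * Complex.I) : ℂ) • (A - star A)


section Helpers

variable {H : Type*} [NormedAddCommGroup H] [InnerProductSpace ℂ H] [CompleteSpace H]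

/-- cfc of a nonneg real-valued function is nonneg. -/
lemma my_cfc_nonneg (A : H →L[ℂ] H) (g : ℂ → ℝ)
    (hg : ∀ z ∈ spectrum ℂ A, 0 ≤ g z)
    (hgc : ContinuousOn g (spectrum ℂ A)) :
    0 ≤ cfc (fun z => (g z : ℂ)) A := by
  by_cases hA : IsStarNormal A
  · have hc : ContinuousOn (fun z => ((Real.sqrt (g z) : ℝ) : ℂ)) (spectrum ℂ A) :=
      Complex.continuous_ofReal.comp_continuousOn (Real.continuous_sqrt.comp_continuousOn hgc)
    have hcs : ContinuousOn (fun z => star ((Real.sqrt (g z) : ℝ) : ℂ)) (spectrum ℂ A) :=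
      continuous_star.comp_continuousOn hc
    have key : cfc (fun z => (g z : ℂ)) A
        = cfc (fun z => star ((Real.sqrt (g z) : ℝ) : ℂ) * ((Real.sqrt (g z) : ℝ) : ℂ)) A := by
      apply cfc_congr
      intro z hz
      simp [Complex.conj_ofReal, ← Complex.ofReal_mul, Real.mul_self_sqrt (hg z hz)]
    rw [key, cfc_mul _ _ A hcs hc, cfc_star]
    exact star_mul_self_nonneg _
  · rw [cfc_apply_of_not_predicate (R := ℂ) A hA]

/-- abs of a cfc with real-valued function. -/
lemma opAbs_cfc_real (A : H →L[ℂ] H) (hA : IsStarNormal A) (g : ℂ → ℝ)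
    (hgc : ContinuousOn g (spectrum ℂ A)) :
    opAbs (cfc (fun z => (g z : ℂ)) A) = cfc (fun z => ((|g z| : ℝ) : ℂ)) A := by
  have hc : ContinuousOn (fun z => ((g z : ℝ) : ℂ)) (spectrum ℂ A) :=
    Complex.continuous_ofReal.comp_continuousOn hgc
  have hca : ContinuousOn (fun z => ((|g z| : ℝ) : ℂ)) (spectrum ℂ A) :=
    Complex.continuous_ofReal.comp_continuousOn (continuous_abs.comp_continuousOn hgc)
  rw [opAbs]
  apply CFC.sqrt_unique
  · have hstar : star (cfc (fun z => (g z : ℂ)) A) = cfc (fun z => (g z : ℂ)) A := by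
      rw [← cfc_star]
      exact cfc_congr fun z hz => Complex.conj_ofReal _
    rw [hstar, ← cfc_mul _ _ A hc hc, ← cfc_mul _ _ A hca hca]
    apply cfc_congr
    intro z hz
    simp [← Complex.ofReal_mul, abs_mul_abs_self]
  · exact my_cfc_nonneg A _ (fun z _ => abs_nonneg _) (continuous_abs.comp_continuousOn hgc)


lemma opRe_cfc (A : H →L[ℂ] H) (hA : IsStarNormal A) :
    opRe A = cfc (fun z : ℂ => ((z.re : ℝ) : ℂ)) A := by
  have h1 : (fun z : ℂ => ((z.re : ℝ) : ℂ))
      = fun z : ℂ => (1 / 2 : ℂ) * (id z + star z) := by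
    funext z
    simp only [id, RCLike.star_def]
    rw [Complex.add_conj]
    push_cast
    ring
  rw [h1, cfc_const_mul _ _ A (by fun_prop), cfc_add (a := A) _ _ (by fun_prop) (by fun_prop),
    cfc_id ℂ A, cfc_star_id (R := ℂ) (a := A) hA, opRe]

lemma opIm_cfc (A : H →L[ℂ] H) (hA : IsStarNormal A) :
    opIm A = cfc (fun z : ℂ => ((z.im : ℝ) : ℂ)) A := by
  have h1 : (fun z : ℂ => ((z.im : ℝ) : ℂ))
      = fun z : ℂ => (1 / (2 * Complex.I) : ℂ) * (id z - star z) := by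
    funext z
    simp only [id, RCLike.star_def]
    rw [Complex.sub_conj]
    have hI : (Complex.I : ℂ) ≠ 0 := Complex.I_ne_zero
    field_simp
    push_cast
    ring
  rw [h1, cfc_const_mul _ _ A (by fun_prop),
    cfc_sub _ _ A (by fun_prop) (by fun_prop), cfc_id ℂ A, cfc_star_id (R := ℂ) (a := A) hA, opIm]

lemma opAbs_cfc (A : H →L[ℂ] H) (hA : IsStarNormal A) :
    opAbs A = cfc (fun z : ℂ => ((‖z‖ : ℝ) : ℂ)) A := by
  have hca : ContinuousOn (fun z : ℂ => ((‖z‖ : ℝ) : ℂ)) (spectrum ℂ A) :=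
    Complex.continuous_ofReal.comp_continuousOn continuous_norm.continuousOn
  rw [opAbs]
  apply CFC.sqrt_unique
  · rw [← cfc_mul _ _ A hca hca]
    have h2 : star A * A = cfc (fun z : ℂ => star z * z) A := by
      rw [cfc_mul _ _ A (by fun_prop) (by fun_prop), cfc_star_id (R := ℂ) (a := A) hA, cfc_id' ℂ A]
    rw [h2]
    apply cfc_congr
    intro z hz
    simp only [RCLike.star_def, ← Complex.ofReal_mul]
    rw [← sq, Complex.sq_norm, mul_comm ((starRingEnd ℂ) z) z, Complex.mul_conj]
  · exact my_cfc_nonneg A _ (fun z _ => norm_nonneg z)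
      continuous_norm.continuousOn

end Helpers

/-- If `A` is a normal bounded operator on a Hilbert space, then
`2 |A| ≥ |Re A| + |Im A|` in the Loewner order. -/
theorem two_smul_abs_ge_abs_re_add_abs_im {H : Type*} [NormedAddCommGroup H]
    [InnerProductSpace ℂ H] [CompleteSpace H] (A : H →L[ℂ] H) (hA : IsStarNormal A) :
    opAbs (opRe A) + opAbs (opIm A) ≤ (2 : ℂ) • opAbs A := by
  have cre : Continuous (fun z : ℂ => ((|z.re| : ℝ) : ℂ)) :=
    Complex.continuous_ofReal.comp (continuous_abs.comp Complex.continuous_re)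
  have cim : Continuous (fun z : ℂ => ((|z.im| : ℝ) : ℂ)) :=
    Complex.continuous_ofReal.comp (continuous_abs.comp Complex.continuous_im)
  have cab : Continuous (fun z : ℂ => ((‖z‖ : ℝ) : ℂ)) :=
    Complex.continuous_ofReal.comp continuous_norm
  rw [opAbs_cfc A hA, opRe_cfc A hA, opIm_cfc A hA,
      opAbs_cfc_real A hA _ Complex.continuous_re.continuousOn,
      opAbs_cfc_real A hA _ Complex.continuous_im.continuousOn]
  have e1 : cfc (fun z : ℂ => ((|z.re| : ℝ) : ℂ)) A + cfc (fun z : ℂ => ((|z.im| : ℝ) : ℂ)) A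
      = cfc (fun z : ℂ => ((|z.re| + |z.im| : ℝ) : ℂ)) A := by
    rw [← cfc_add (a := A) _ _ cre.continuousOn cim.continuousOn]
    apply cfc_congr; intro z _; push_cast; ring
  have e2 : (2 : ℂ) • cfc (fun z : ℂ => ((‖z‖ : ℝ) : ℂ)) A
      = cfc (fun z : ℂ => ((2 * ‖z‖ : ℝ) : ℂ)) A := by
    rw [← cfc_const_mul (2 : ℂ) _ A cab.continuousOn]
    apply cfc_congr; intro z _; push_cast; ring
  rw [e1, e2, ← sub_nonneg,
    ← cfc_sub _ _ A (by exact (Complex.continuous_ofReal.comp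
        (continuous_const.mul continuous_norm)).continuousOn)
      (by exact (Complex.continuous_ofReal.comp
        ((continuous_abs.comp Complex.continuous_re).add
          (continuous_abs.comp Complex.continuous_im))).continuousOn)]
  have e3 : cfc (fun z : ℂ => ((2 * ‖z‖ : ℝ) : ℂ) - ((|z.re| + |z.im| : ℝ) : ℂ)) A
      = cfc (fun z : ℂ => ((2 * ‖z‖ - (|z.re| + |z.im|) : ℝ) : ℂ)) A := by
    apply cfc_congr; intro z _; push_cast; ring
  rw [e3]
  apply my_cfc_nonneg
  · intro z _
    have h1 := Complex.abs_re_le_norm z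
    have h2 := Complex.abs_im_le_norm z
    linarith
  · exact ((continuous_const.mul continuous_norm).sub
      ((continuous_abs.comp Complex.continuous_re).add
        (continuous_abs.comp Complex.continuous_im))).continuousOn
end

section
/- Douglas' Lemma: Let A, B ∈ B(H) with A A* ≤ B B*. Then there exists C ∈ B(H) with A = B C, ‖C‖ ≤ 1, ker C = ker A, and the range of C contained in the closure of the range of B*. -/
open ContinuousLinearMap Submodule
open scoped InnerProductSpace

set_option maxHeartbeats 1000000 in
/-- Douglas' Lemma: if `A A* ≤ B B*` in the Loewner order on `B(H)`, then there is a
contraction `C` with `A = B C`, `ker C = ker A`, and the range of `C` contained in the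
closure of the range of `B*`. -/
theorem douglas_lemma {H : Type*} [NormedAddCommGroup H] [InnerProductSpace ℂ H]
    [CompleteSpace H] (A B : H →L[ℂ] H) (h : A * star A ≤ B * star B) :
    ∃ C : H →L[ℂ] H, A = B * C ∧ ‖C‖ ≤ 1 ∧
      LinearMap.ker (C : H →ₗ[ℂ] H) = LinearMap.ker (A : H →ₗ[ℂ] H) ∧
      (LinearMap.range (C : H →ₗ[ℂ] H) : Set H) ⊆ closure (LinearMap.range ((star B : H →L[ℂ] H) : H →ₗ[ℂ] H) : Set H) := by
  -- Step 1: the pointwise norm inequality ‖A* x‖ ≤ ‖B* x‖.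
  have hnorm : ∀ x : H, ‖star A x‖ ≤ ‖star B x‖ := by
    intro x
    have hp := (ContinuousLinearMap.le_def _ _).mp h
    have h0 := hp.inner_nonneg_left x
    have hA : ⟪(A * star A) x, x⟫_ℂ = (‖star A x‖ : ℂ) ^ 2 := by
      rw [ContinuousLinearMap.mul_apply, ContinuousLinearMap.star_eq_adjoint,
        ← ContinuousLinearMap.adjoint_inner_right, inner_self_eq_norm_sq_to_K]
      norm_cast
    have hB : ⟪(B * star B) x, x⟫_ℂ = (‖star B x‖ : ℂ) ^ 2 := by
      rw [ContinuousLinearMap.mul_apply, ContinuousLinearMap.star_eq_adjoint,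
        ← ContinuousLinearMap.adjoint_inner_right, inner_self_eq_norm_sq_to_K]
      norm_cast
    have h1 : (0 : ℝ) ≤ ‖star B x‖ ^ 2 - ‖star A x‖ ^ 2 := by
      rw [ContinuousLinearMap.sub_apply, inner_sub_left, hA, hB, ← Complex.ofReal_pow,
        ← Complex.ofReal_pow, ← Complex.ofReal_sub] at h0
      exact_mod_cast h0
    nlinarith [norm_nonneg (star A x), norm_nonneg (star B x)]
  -- kernel inclusion
  have hker : LinearMap.ker ((star B : H →L[ℂ] H) : H →ₗ[ℂ] H)
      ≤ LinearMap.ker ((star A : H →L[ℂ] H) : H →ₗ[ℂ] H) := by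
    intro x hx
    have hx' : star B x = 0 := hx
    have := hnorm x
    rw [hx', norm_zero] at this
    exact norm_le_zero_iff.mp this
  set bstar : H →ₗ[ℂ] H := ((star B : H →L[ℂ] H) : H →ₗ[ℂ] H) with hbstar
  -- the map f₀ : range B* → H, B* x ↦ A* x
  set g : (H ⧸ LinearMap.ker bstar) →ₗ[ℂ] H :=
    (LinearMap.ker bstar).liftQ ((star A : H →L[ℂ] H) : H →ₗ[ℂ] H) hker with hg
  set iso := LinearMap.quotKerEquivRange bstar with hiso
  set f₀ : LinearMap.range bstar →ₗ[ℂ] H := g.comp (iso.symm : _ →ₗ[ℂ] _) with hf₀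
  have hf₀_apply : ∀ (x : H) (hx : star B x ∈ LinearMap.range bstar),
      f₀ ⟨star B x, hx⟩ = star A x := by
    intro x hx
    have h1 : iso (Submodule.Quotient.mk x) = ⟨star B x, hx⟩ := by
      apply Subtype.ext
      exact bstar.quotKerEquivRange_apply_mk x
    have h2 : iso.symm ⟨star B x, hx⟩ = Submodule.Quotient.mk x := by
      rw [← h1, LinearEquiv.symm_apply_apply]
    rw [hf₀]
    simp only [LinearMap.comp_apply, LinearEquiv.coe_coe, h2, hg, Submodule.liftQ_apply]
    rfl
  have hbound : ∀ v : LinearMap.range bstar, ‖f₀ v‖ ≤ 1 * ‖v‖ := by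
    intro v
    obtain ⟨x, hx⟩ := v.2
    have hmem : star B x ∈ LinearMap.range bstar := ⟨x, rfl⟩
    have hv : v = ⟨star B x, hmem⟩ := Subtype.ext hx.symm
    rw [hv, hf₀_apply x hmem, one_mul]
    exact hnorm x
  set f : LinearMap.range bstar →L[ℂ] H := f₀.mkContinuous 1 hbound with hf
  have hf_norm : ‖f‖ ≤ 1 := f₀.mkContinuous_norm_le zero_le_one hbound
  -- closure K of range B*
  set K := (LinearMap.range bstar).topologicalClosure with hKdef
  haveI : CompleteSpace K :=
    (LinearMap.range bstar).isClosed_topologicalClosure.completeSpace_coe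
  -- inclusion e : range B* → K
  set e : LinearMap.range bstar →L[ℂ] K :=
    ((LinearMap.range bstar).subtypeL).codRestrict K
      (fun v => (LinearMap.range bstar).le_topologicalClosure v.2) with he
  have h_dense : DenseRange e := by
    intro y
    rw [closure_subtype]
    have himg : Subtype.val '' Set.range e = (LinearMap.range bstar : Set H) := by
      ext z
      constructor
      · rintro ⟨w, ⟨v, rfl⟩, rfl⟩
        exact v.2
      · rintro hz
        exact ⟨e ⟨z, hz⟩, ⟨⟨z, hz⟩, rfl⟩, rfl⟩
    rw [himg, ← Submodule.topologicalClosure_coe]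
    exact y.2
  have h_isom : ∀ v : LinearMap.range bstar, ‖v‖ ≤ (1 : NNReal) * ‖e v‖ := by
    intro v
    have : ‖e v‖ = ‖v‖ := rfl
    rw [this]
    simp
  have h_ue := ContinuousLinearMap.isUniformEmbedding_of_bound e h_isom
  set T₁ : K →L[ℂ] H := f.extend e with hT₁
  have hT₁_norm : ‖T₁‖ ≤ 1 := by
    have h1 := f.opNorm_extend_le (e := e) h_dense h_isom
    have h2 : ((1 : NNReal) : ℝ) * ‖f‖ ≤ 1 := by simpa using hf_norm
    exact h1.trans h2
  set T : H →L[ℂ] H := T₁.comp (orthogonalProjection K) with hT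
  have hT_norm : ‖T‖ ≤ 1 := by
    have h2 := orthogonalProjection_norm_le K
    have h4 : (0 : ℝ) ≤ ‖orthogonalProjection K‖ := ContinuousLinearMap.opNorm_nonneg _
    calc ‖T‖ ≤ ‖T₁‖ * ‖orthogonalProjection K‖ :=
          ContinuousLinearMap.opNorm_comp_le T₁ (orthogonalProjection K)
    _ ≤ 1 * 1 := mul_le_mul hT₁_norm h2 h4 zero_le_one
    _ = 1 := one_mul 1
  -- T (B* x) = A* x
  have hT_apply : ∀ x : H, T (star B x) = star A x := by
    intro x
    have hmemE : star B x ∈ LinearMap.range bstar := ⟨x, rfl⟩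
    have hmemK : star B x ∈ K := (LinearMap.range bstar).le_topologicalClosure hmemE
    have hPx : orthogonalProjection K (star B x) = ⟨star B x, hmemK⟩ := by
      apply Subtype.ext
      exact Submodule.starProjection_eq_self_iff.mpr hmemK
    have hex : e ⟨star B x, hmemE⟩ = ⟨star B x, hmemK⟩ := rfl
    rw [hT]
    simp only [ContinuousLinearMap.comp_apply]
    rw [hPx, ← hex, hT₁, ContinuousLinearMap.extend_eq (h_dense := h_dense) (h_e := h_ue.isUniformInducing)]
    exact hf₀_apply x hmemE
  -- T vanishes on Kᗮ
  have hT_orth : ∀ w : H, w ∈ Kᗮ → T w = 0 := by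
    intro w hw
    rw [hT]
    simp only [ContinuousLinearMap.comp_apply]
    rw [show orthogonalProjection K w = 0 from
      Submodule.orthogonalProjectionOnto_apply_of_mem_orthogonal hw]
    exact map_zero T₁
  set C : H →L[ℂ] H := star T with hC
  -- C x ∈ K for all x
  have hCK : ∀ x : H, C x ∈ K := by
    intro x
    have hmem : C x ∈ Kᗮᗮ := by
      rw [Submodule.mem_orthogonal]
      intro w hw
      rw [hC, ContinuousLinearMap.star_eq_adjoint, ContinuousLinearMap.adjoint_inner_right,
        hT_orth w hw, inner_zero_left]
    rwa [Submodule.orthogonal_orthogonal] at hmem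
  -- inner products of C x against range B*
  have hinner : ∀ x y : H, ⟪C x, star B y⟫_ℂ = ⟪A x, y⟫_ℂ := by
    intro x y
    rw [hC, ContinuousLinearMap.star_eq_adjoint, ContinuousLinearMap.adjoint_inner_left,
      hT_apply, ContinuousLinearMap.star_eq_adjoint, ContinuousLinearMap.adjoint_inner_right]
  have hBC : A = B * C := by
    have hTB : T * star B = star A := by
      ext x
      exact hT_apply x
    calc A = star (star A) := (star_star A).symm
    _ = star (T * star B) := by rw [hTB]
    _ = star (star B) * star T := star_mul _ _
    _ = B * C := by rw [star_star, hC]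
  refine ⟨C, hBC, ?_, ?_, ?_⟩
  · rw [hC, norm_star]
    exact hT_norm
  · ext x
    simp only [LinearMap.mem_ker, ContinuousLinearMap.coe_coe]
    constructor
    · intro hx
      have : A x = B (C x) := by rw [hBC]; rfl
      rw [this, hx, map_zero]
    · intro hx
      have horth : ∀ z ∈ (LinearMap.range bstar : Set H), ⟪z, C x⟫_ℂ = 0 := by
        rintro z ⟨y, rfl⟩
        have h1 : ⟪C x, star B y⟫_ℂ = 0 := by rw [hinner, hx, inner_zero_left]
        exact inner_eq_zero_symm.mpr h1
      have hcl : ∀ z ∈ closure (LinearMap.range bstar : Set H), ⟪z, C x⟫_ℂ = 0 := by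
        intro z hz
        have hclosed : IsClosed {z : H | ⟪z, C x⟫_ℂ = 0} :=
          isClosed_eq (continuous_id.inner continuous_const) continuous_const
        exact hclosed.closure_subset_iff.mpr horth hz
      have hCx : (C x : H) ∈ closure (LinearMap.range bstar : Set H) := by
        rw [← Submodule.topologicalClosure_coe]
        exact hCK x
      exact inner_self_eq_zero.mp (hcl _ hCx)
  · rintro z ⟨x, rfl⟩
    rw [← Submodule.topologicalClosure_coe]
    exact hCK x
end

section
/- Let ν : Borel(X) → B(H) be a quantum probability measure (ν(X) = I) with ν = ν₁ + ⋯ + ν_n for POVMs ν_i. Then there exist quantum probability measures γ_i : Borel(X) → B(H) such that ν(E) = Σ_{i=1}^n ν_i(X)^{1/2} γ_i(E) ν_i(X)^{1/2} for all Borel E; in particular, note Σ_i ν_i(X) = I, so this is a C*-convex combination. -/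
open scoped InnerProductSpace
open MeasureTheory

/-- A positive operator valued measure on the measurable sets of `X` with values in the
bounded operators on `H`: it is zero on `∅`, takes positive semidefinite values, and is
weakly countably additive. -/
structure POVM (X : Type*) [MeasurableSpace X] (H : Type*) [NormedAddCommGroup H]
    [InnerProductSpace ℂ H] [CompleteSpace H] where
  toFun : Set X → (H →L[ℂ] H)
  empty' : toFun ∅ = 0
  pos' : ∀ E : Set X, MeasurableSet E → 0 ≤ toFun E
  additive' : ∀ E : ℕ → Set X, (∀ n, MeasurableSet (E n)) →
    Pairwise (Function.onFun Disjoint E) →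
    ∀ x y : H, HasSum (fun n => ⟪toFun (E n) x, y⟫_ℂ) ⟪toFun (⋃ n, E n) x, y⟫_ℂ

namespace POVMProof

set_option linter.unusedSectionVars false
set_option synthInstance.maxHeartbeats 1000000
set_option maxHeartbeats 1000000

variable {X : Type*} [MeasurableSpace X]
variable {H : Type*} [NormedAddCommGroup H] [InnerProductSpace ℂ H] [CompleteSpace H]


lemma op_ext {A B : H →L[ℂ] H} (h : ∀ x y, ⟪A x, y⟫_ℂ = ⟪B x, y⟫_ℂ) : A = B :=
  ContinuousLinearMap.ext fun x => ext_inner_right ℂ (h x)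

lemma sa_inner {A : H →L[ℂ] H} (hA : IsSelfAdjoint A) (x y : H) : ⟪A x, y⟫_ℂ = ⟪x, A y⟫_ℂ :=
  hA.isSymmetric x y

lemma re_inner_le {A B : H →L[ℂ] H} (h : A ≤ B) (x : H) :
    RCLike.re ⟪A x, x⟫_ℂ ≤ RCLike.re ⟪B x, x⟫_ℂ := by
  have h1 := ((ContinuousLinearMap.le_def A B).mp h).re_inner_nonneg_left x
  simp only [ContinuousLinearMap.sub_apply, inner_sub_left, map_sub] at h1
  linarith

lemma norm_sq_eq {A : H →L[ℂ] H} (hA : IsSelfAdjoint A) (x : H) :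
    ‖A x‖ ^ 2 = RCLike.re ⟪(A * A) x, x⟫_ℂ := by
  rw [ContinuousLinearMap.mul_apply, sa_inner hA, ← inner_self_eq_norm_sq (𝕜 := ℂ)]

lemma sqrt_sa {A : H →L[ℂ] H} : IsSelfAdjoint (CFC.sqrt A) :=
  IsSelfAdjoint.of_nonneg (CFC.sqrt_nonneg _)

lemma inner_sqrt_sqrt {A : H →L[ℂ] H} (hA : 0 ≤ A) (x y : H) :
    ⟪CFC.sqrt A x, CFC.sqrt A y⟫_ℂ = ⟪A x, y⟫_ℂ := by
  conv_rhs => rw [← CFC.sqrt_mul_sqrt_self A hA]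
  rw [ContinuousLinearMap.mul_apply, ← sa_inner (sqrt_sa (A := A))]

lemma sqrt_apply_norm_le {A B : H →L[ℂ] H} (hA : 0 ≤ A) (hB : 0 ≤ B) (h : A ≤ B) (z : H) :
    ‖CFC.sqrt A z‖ ≤ ‖CFC.sqrt B z‖ := by
  have h1 : ‖CFC.sqrt A z‖ ^ 2 = RCLike.re ⟪A z, z⟫_ℂ := by
    rw [← inner_sqrt_sqrt hA, inner_self_eq_norm_sq]
  have h2 : ‖CFC.sqrt B z‖ ^ 2 = RCLike.re ⟪B z, z⟫_ℂ := by
    rw [← inner_sqrt_sqrt hB, inner_self_eq_norm_sq]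
  nlinarith [re_inner_le h z, norm_nonneg (CFC.sqrt A z), norm_nonneg (CFC.sqrt B z)]

lemma sqrt_eq_cfc {A : H →L[ℂ] H} (hA : 0 ≤ A) : CFC.sqrt A = cfc Real.sqrt A := by
  have hsa : IsSelfAdjoint A := hA.isSelfAdjoint
  refine CFC.sqrt_unique ?_ ?_
  · rw [← cfc_mul Real.sqrt Real.sqrt A (by fun_prop) (by fun_prop)]
    calc cfc (fun t => Real.sqrt t * Real.sqrt t) A = cfc (id : ℝ → ℝ) A := by
          apply cfc_congr
          intro t ht
          exact Real.mul_self_sqrt (spectrum_nonneg_of_nonneg hA ht)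
      _ = A := cfc_id ℝ A
  · exact cfc_nonneg fun t _ => Real.sqrt_nonneg t

end POVMProof

namespace POVMProof2
open POVMProof

variable {X : Type*} [MeasurableSpace X]
variable {H : Type*} [NormedAddCommGroup H] [InnerProductSpace ℂ H] [CompleteSpace H]


set_option linter.unusedSectionVars false
set_option synthInstance.maxHeartbeats 1000000
set_option maxHeartbeats 1000000

lemma povm_sum_finset (μ : POVM X H) (E : ℕ → Set X) (hE : ∀ n, MeasurableSet (E n))
    (hd : Pairwise (Function.onFun Disjoint E)) (s : Finset ℕ) :
    μ.toFun (⋃ n ∈ s, E n) = ∑ n ∈ s, μ.toFun (E n) := by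
  classical
  set F : ℕ → Set X := fun n => if n ∈ s then E n else ∅ with hF
  have hFmeas : ∀ n, MeasurableSet (F n) := by
    intro n
    by_cases h : n ∈ s <;> simp [hF, h, hE n]
  have hFd : Pairwise (Function.onFun Disjoint F) := by
    intro i j hij
    by_cases hi : i ∈ s <;> by_cases hj : j ∈ s <;>
      simp [Function.onFun, hF, hi, hj, hd hij]
  have hU : (⋃ n, F n) = ⋃ n ∈ s, E n := by
    ext p
    simp only [Set.mem_iUnion, hF]
    constructor
    · rintro ⟨n, hn⟩
      by_cases h : n ∈ s
      · exact ⟨n, h, by simpa [h] using hn⟩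
      · simp [h] at hn
    · rintro ⟨n, hn, hp⟩
      exact ⟨n, by simpa [hn] using hp⟩
  apply op_ext
  intro x y
  have h1 := μ.additive' F hFmeas hFd x y
  rw [hU] at h1
  have h2 : ∀ n ∉ s, ⟪μ.toFun (F n) x, y⟫_ℂ = 0 := by
    intro n hn
    simp [hF, hn, μ.empty']
  have h3 := hasSum_sum_of_ne_finset_zero (L := SummationFilter.unconditional ℕ) h2
  have h4 := h3.unique h1
  rw [← h4]
  rw [ContinuousLinearMap.sum_apply, sum_inner]
  refine Finset.sum_congr rfl fun n hn => ?_
  simp [hF, hn]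

lemma povm_pair (μ : POVM X H) {E F : Set X} (hE : MeasurableSet E) (hF : MeasurableSet F)
    (hd : Disjoint E F) : μ.toFun (E ∪ F) = μ.toFun E + μ.toFun F := by
  classical
  have h := povm_sum_finset μ (fun n => if n = 0 then E else if n = 1 then F else ∅)
    (by intro n; by_cases h0 : n = 0 <;> by_cases h1 : n = 1 <;> simp [h0, h1, hE, hF])
    (by
      intro i j hij
      by_cases hi0 : i = 0 <;> by_cases hi1 : i = 1 <;> by_cases hj0 : j = 0 <;>
        by_cases hj1 : j = 1 <;>
        simp_all [Function.onFun, hd, hd.symm] <;> omega)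
    ({0, 1} : Finset ℕ)
  have hU : (⋃ n ∈ ({0, 1} : Finset ℕ), (if n = 0 then E else if n = 1 then F else ∅)) = E ∪ F := by
    simp
  rw [hU] at h
  simpa using h

lemma povm_le_univ (μ : POVM X H) {E : Set X} (hE : MeasurableSet E) :
    μ.toFun E ≤ μ.toFun Set.univ := by
  have h : μ.toFun (E ∪ Eᶜ) = μ.toFun E + μ.toFun Eᶜ :=
    povm_pair μ hE hE.compl disjoint_compl_right
  rw [Set.union_compl_self] at h
  rw [h]
  exact le_add_of_nonneg_right (μ.pos' _ hE.compl)

end POVMProof2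

namespace POVMProof3


noncomputable def fkf (k : ℕ) (t : ℝ) : ℝ :=
  ((k : ℝ) + 1) ^ 2 * Real.sqrt t / (1 + ((k : ℝ) + 1) ^ 2 * t)

noncomputable def gkf (k : ℕ) (t : ℝ) : ℝ :=
  ((k : ℝ) + 1) ^ 2 * t / (1 + ((k : ℝ) + 1) ^ 2 * t)

lemma denom_pos (k : ℕ) {t : ℝ} (ht : 0 ≤ t) : 0 < 1 + ((k : ℝ) + 1) ^ 2 * t := by positivity

lemma fkf_cont (k : ℕ) : ContinuousOn (fkf k) {t : ℝ | 0 ≤ t} := by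
  apply ContinuousOn.div
  · exact (continuous_const.mul Real.continuous_sqrt).continuousOn
  · exact (continuous_const.add (continuous_const.mul continuous_id)).continuousOn
  · intro t ht
    exact ne_of_gt (denom_pos k ht)

lemma gkf_cont (k : ℕ) : ContinuousOn (gkf k) {t : ℝ | 0 ≤ t} := by
  apply ContinuousOn.div
  · exact (continuous_const.mul continuous_id).continuousOn
  · exact (continuous_const.add (continuous_const.mul continuous_id)).continuousOn
  · intro t ht
    exact ne_of_gt (denom_pos k ht)

lemma r1 (k : ℕ) {t : ℝ} (ht : 0 ≤ t) : |gkf k t| ≤ 1 := by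
  rw [gkf, abs_of_nonneg (by positivity)]
  rw [div_le_one (denom_pos k ht)]
  linarith

lemma r4 (k : ℕ) {t : ℝ} (ht : 0 ≤ t) : Real.sqrt t * fkf k t = gkf k t := by
  rw [fkf, gkf, mul_div_assoc']
  congr 1
  rw [← mul_assoc, mul_comm (Real.sqrt t), mul_assoc, Real.mul_self_sqrt ht]

lemma r2 (k : ℕ) {t : ℝ} (ht : 0 ≤ t) :
    |Real.sqrt t * gkf k t - Real.sqrt t| ≤ 1 / (2 * ((k : ℝ) + 1)) := by
  have hd := denom_pos k ht
  have hs := Real.sqrt_nonneg t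
  have hss := Real.mul_self_sqrt ht
  have h1 : Real.sqrt t * gkf k t - Real.sqrt t
      = -(Real.sqrt t / (1 + ((k : ℝ) + 1) ^ 2 * t)) := by
    rw [gkf]
    field_simp
    ring
  rw [h1, abs_neg, abs_of_nonneg (by positivity)]
  rw [div_le_div_iff₀ hd (by positivity)]
  nlinarith [sq_nonneg (1 - ((k : ℝ) + 1) * Real.sqrt t)]

lemma r3 (k : ℕ) {t : ℝ} (ht : 0 ≤ t) : |fkf k t| ≤ ((k : ℝ) + 1) ^ 2 * Real.sqrt t := by
  rw [fkf, abs_of_nonneg (by positivity)]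
  apply div_le_self (by positivity)
  have : 0 ≤ ((k : ℝ) + 1) ^ 2 * t := by positivity
  linarith

end POVMProof3

namespace POVMProof4
open POVMProof POVMProof3 POVMProof2

variable {X : Type*} [MeasurableSpace X]
variable {H : Type*} [NormedAddCommGroup H] [InnerProductSpace ℂ H] [CompleteSpace H]


set_option linter.unusedSectionVars false
set_option synthInstance.maxHeartbeats 1000000
set_option maxHeartbeats 2000000

open POVMProof3

variable {H : Type*} [NormedAddCommGroup H] [InnerProductSpace ℂ H] [CompleteSpace H]


set_option linter.unusedSectionVars false
set_option synthInstance.maxHeartbeats 1000000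
set_option maxHeartbeats 2000000

lemma cfc_apply_norm_le {T : H →L[ℂ] H} (hT : IsSelfAdjoint T) {f g : ℝ → ℝ}
    (hf : ContinuousOn f (spectrum ℝ T)) (hg : ContinuousOn g (spectrum ℝ T))
    (h : ∀ t ∈ spectrum ℝ T, |f t| ≤ |g t|) (x : H) : ‖cfc f T x‖ ≤ ‖cfc g T x‖ := by
  have hf2 : ‖cfc f T x‖ ^ 2 = RCLike.re ⟪(cfc f T * cfc f T) x, x⟫_ℂ :=
    norm_sq_eq (cfc_predicate f T) x
  have hg2 : ‖cfc g T x‖ ^ 2 = RCLike.re ⟪(cfc g T * cfc g T) x, x⟫_ℂ :=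
    norm_sq_eq (cfc_predicate g T) x
  have hmul_f : cfc f T * cfc f T = cfc (fun t => f t * f t) T := (cfc_mul f f T hf hf).symm
  have hmul_g : cfc g T * cfc g T = cfc (fun t => g t * g t) T := (cfc_mul g g T hg hg).symm
  have hle : cfc (fun t => f t * f t) T ≤ cfc (fun t => g t * g t) T := by
    refine cfc_mono (fun t ht => ?_) (hf.mul hf) (hg.mul hg)
    calc f t * f t = |f t| * |f t| := (abs_mul_abs_self _).symm
      _ ≤ |g t| * |g t| := mul_self_le_mul_self (abs_nonneg _) (h t ht)
      _ = g t * g t := abs_mul_abs_self _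
  have hre := re_inner_le hle x
  rw [hmul_f] at hf2
  rw [hmul_g] at hg2
  nlinarith [norm_nonneg (cfc f T x), norm_nonneg (cfc g T x)]

lemma cfc_apply_norm_le_const {T : H →L[ℂ] H} (hT : IsSelfAdjoint T) {f : ℝ → ℝ} {c : ℝ}
    (hc : 0 ≤ c) (hf : ContinuousOn f (spectrum ℝ T)) (h : ∀ t ∈ spectrum ℝ T, |f t| ≤ c)
    (x : H) : ‖cfc f T x‖ ≤ c * ‖x‖ := by
  have h1 := cfc_apply_norm_le hT hf continuousOn_const
    (fun t ht => by rw [abs_of_nonneg hc]; exact h t ht) x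
  rw [cfc_const c T hT] at h1
  refine h1.trans ?_
  rw [Algebra.algebraMap_eq_smul_one, ContinuousLinearMap.smul_apply,
    ContinuousLinearMap.one_apply, norm_smul, Real.norm_eq_abs, abs_of_nonneg hc]

end POVMProof4

namespace POVMProof5
open POVMProof POVMProof2 POVMProof3 POVMProof4

variable {H : Type*} [NormedAddCommGroup H] [InnerProductSpace ℂ H] [CompleteSpace H]

set_option linter.unusedSectionVars false
set_option synthInstance.maxHeartbeats 1000000
set_option maxHeartbeats 4000000

lemma exists_contraction {T A : H →L[ℂ] H} (hT : 0 ≤ T) (hA : 0 ≤ A) (hAT : A ≤ T) :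
    ∃ C : H →L[ℂ] H, ‖C‖ ≤ 1 ∧ (∀ u, C (CFC.sqrt T u) = CFC.sqrt A u) ∧
      ∀ z, CFC.sqrt T z = 0 → C z = 0 := by
  have hTsa : IsSelfAdjoint T := hT.isSelfAdjoint
  set S := CFC.sqrt T with hS
  set R := CFC.sqrt A with hR
  have hspec : spectrum ℝ T ⊆ {t : ℝ | 0 ≤ t} := fun t ht => spectrum_nonneg_of_nonneg hT ht
  have hRz : ∀ z, ‖R z‖ ≤ ‖S z‖ := sqrt_apply_norm_le hA hT hAT
  have hScfc : S = cfc Real.sqrt T := sqrt_eq_cfc hT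
  set Fk : ℕ → (H →L[ℂ] H) := fun k => cfc (fkf k) T with hFk
  set Gk : ℕ → (H →L[ℂ] H) := fun k => cfc (gkf k) T with hGk
  have hsqrt_cont : ContinuousOn Real.sqrt (spectrum ℝ T) := Real.continuous_sqrt.continuousOn
  have hfc : ∀ k, ContinuousOn (fkf k) (spectrum ℝ T) := fun k => (fkf_cont k).mono hspec
  have hgc : ∀ k, ContinuousOn (gkf k) (spectrum ℝ T) := fun k => (gkf_cont k).mono hspec
  have o1 : ∀ k, Fk k * S = Gk k := by
    intro k
    rw [hScfc, hFk, hGk, ← cfc_mul (fkf k) Real.sqrt T (hfc k) hsqrt_cont]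
    exact cfc_congr fun t ht => by rw [mul_comm]; exact r4 k (hspec ht)
  have o1' : ∀ k, S * Fk k = Gk k := by
    intro k
    rw [hScfc, hFk, hGk, ← cfc_mul Real.sqrt (fkf k) T hsqrt_cont (hfc k)]
    exact cfc_congr fun t ht => r4 k (hspec ht)
  have hGk_norm : ∀ k x, ‖Gk k x‖ ≤ ‖x‖ := by
    intro k x
    have := cfc_apply_norm_le_const hTsa zero_le_one (hgc k) (fun t ht => r1 k (hspec ht)) x
    simpa using this
  set B : ℕ → (H →L[ℂ] H) := fun k => R ∘L Fk k with hB
  have hB_apply : ∀ k x, B k x = R (Fk k x) := fun k x => rfl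
  have o3 : ∀ k x, ‖B k x‖ ≤ ‖x‖ := by
    intro k x
    calc ‖B k x‖ = ‖R (Fk k x)‖ := rfl
      _ ≤ ‖S (Fk k x)‖ := hRz _
      _ = ‖(S * Fk k) x‖ := by rw [ContinuousLinearMap.mul_apply]
      _ = ‖Gk k x‖ := by rw [o1']
      _ ≤ ‖x‖ := hGk_norm k x
  have o4 : ∀ k u, ‖B k (S u) - R u‖ ≤ 1 / (2 * ((k : ℝ) + 1)) * ‖u‖ := by
    intro k u
    have h1 : B k (S u) = R (Gk k u) := by
      rw [hB_apply]
      congr 1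
      rw [← ContinuousLinearMap.mul_apply, o1]
    have h2 : B k (S u) - R u = R (Gk k u - u) := by rw [h1, map_sub]
    rw [h2]
    have h3 : S * Gk k - S = cfc (fun t => Real.sqrt t * gkf k t - Real.sqrt t) T := by
      rw [hScfc, hGk, ← cfc_mul Real.sqrt (gkf k) T hsqrt_cont (hgc k),
        ← cfc_sub (fun x => Real.sqrt x * gkf k x) Real.sqrt T ((hsqrt_cont.mul (hgc k))) hsqrt_cont]
    calc ‖R (Gk k u - u)‖ ≤ ‖S (Gk k u - u)‖ := hRz _
      _ = ‖(S * Gk k - S) u‖ := by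
          rw [ContinuousLinearMap.sub_apply, ContinuousLinearMap.mul_apply, map_sub]
      _ ≤ 1 / (2 * ((k : ℝ) + 1)) * ‖u‖ := by
          rw [h3]
          exact cfc_apply_norm_le_const hTsa (by positivity) (by
            exact (hsqrt_cont.mul (hgc k)).sub hsqrt_cont)
            (fun t ht => r2 k (hspec ht)) u
  have o5 : ∀ k z, S z = 0 → Fk k z = 0 := by
    intro k z hz
    have h1 : ‖Fk k z‖ ≤ ‖cfc (fun t => ((k : ℝ) + 1) ^ 2 * Real.sqrt t) T z‖ := by
      refine cfc_apply_norm_le hTsa (hfc k) (continuousOn_const.mul hsqrt_cont) ?_ z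
      intro t ht
      have h2 := r3 k (hspec ht)
      have h3 : 0 ≤ ((k : ℝ) + 1) ^ 2 * Real.sqrt t := by positivity
      simp only [Pi.mul_apply]
      rwa [abs_of_nonneg h3]
    have h2 : cfc (fun t => ((k : ℝ) + 1) ^ 2 * Real.sqrt t) T
        = ((k : ℝ) + 1) ^ 2 • S := by
      rw [hScfc]
      exact cfc_const_mul _ Real.sqrt T hsqrt_cont
    rw [h2, ContinuousLinearMap.smul_apply, hz, smul_zero, norm_zero] at h1
    exact norm_le_zero_iff.mp h1
  set K := (LinearMap.range (S : H →ₗ[ℂ] H)).topologicalClosure with hK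
  haveI : CompleteSpace K := (Submodule.isClosed_topologicalClosure _).completeSpace_coe
  set P : H →L[ℂ] H := K.subtypeL ∘L Submodule.orthogonalProjectionOnto K with hPdef
  have hPmem : ∀ x, P x ∈ K := fun x => (Submodule.orthogonalProjectionOnto K x).2
  have hSx_mem : ∀ x, S x ∈ K := fun x =>
    Submodule.le_topologicalClosure _ (LinearMap.mem_range_self _ x)
  have hperp : ∀ x, S (x - P x) = 0 := by
    intro x
    have hmem : x - P x ∈ Kᗮ := Submodule.sub_starProjection_mem_orthogonal x
    have h0 : ⟪S (x - P x), S (x - P x)⟫_ℂ = 0 := by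
      rw [sa_inner (sqrt_sa (A := T)) (x - P x) (S (x - P x))]
      have h2 : S (S (x - P x)) ∈ K := hSx_mem _
      have h3 := (Submodule.mem_orthogonal K (x - P x)).mp hmem _ h2
      rw [← inner_conj_symm, h3, map_zero]
    exact inner_self_eq_zero.mp h0
  have hdense : ∀ u ∈ K, ∀ ε > 0, ∃ w : H, ‖u - S w‖ < ε := by
    intro u hu ε hε
    have h1 : u ∈ closure ((LinearMap.range (S : H →ₗ[ℂ] H) : Submodule ℂ H) : Set H) := by
      rw [← Submodule.topologicalClosure_coe]; exact hu
    rcases Metric.mem_closure_iff.mp h1 ε hε with ⟨b, hb, hdist⟩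
    rcases hb with ⟨w, rfl⟩
    exact ⟨w, by rwa [dist_eq_norm] at hdist⟩
  have hBP : ∀ k x, B k x = B k (P x) := by
    intro k x
    have h0 : B k (x - P x) = 0 := by rw [hB_apply, o5 k _ (hperp x), map_zero]
    have h1 : B k x - B k (P x) = 0 := by rw [← map_sub, h0]
    exact sub_eq_zero.mp h1
  have hcauchy : ∀ x, CauchySeq (fun k => B k x) := by
    intro x
    rw [Metric.cauchySeq_iff]
    intro ε hε
    obtain ⟨w, hw⟩ := hdense (P x) (hPmem x) (ε / 4) (by positivity)
    obtain ⟨N, hN⟩ := exists_nat_gt (2 * ‖w‖ / ε)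
    refine ⟨N, fun m hm n hn => ?_⟩
    have key : ∀ k, N ≤ k → ‖B k (S w) - R w‖ ≤ ε / 4 := by
      intro k hk
      refine (o4 k w).trans ?_
      have hk1 : 2 * ‖w‖ / ε < (k : ℝ) + 1 := by
        have : (N : ℝ) ≤ k := Nat.cast_le.mpr hk
        linarith
      have hk2 : 2 * ‖w‖ < ε * ((k : ℝ) + 1) := by
        rw [div_lt_iff₀ hε] at hk1
        linarith
      have hpos : (0:ℝ) < 2 * ((k:ℝ)+1) := by positivity
      rw [div_mul_eq_mul_div, one_mul, div_le_iff₀ hpos]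
      nlinarith [hk2]
    have est : ∀ k, ‖B k (P x) - B k (S w)‖ < ε / 4 := by
      intro k
      calc ‖B k (P x) - B k (S w)‖ = ‖B k (P x - S w)‖ := by rw [map_sub]
        _ ≤ ‖P x - S w‖ := o3 k _
        _ < ε / 4 := hw
    rw [dist_eq_norm, hBP m x, hBP n x]
    have tri : ‖B m (P x) - B n (P x)‖ ≤ ‖B m (P x) - B m (S w)‖ + (‖B m (S w) - R w‖
        + ‖R w - B n (S w)‖) + ‖B n (S w) - B n (P x)‖ := by
      have := dist_triangle4 (B m (P x)) (B m (S w)) (B n (S w)) (B n (P x))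
      have h2 := dist_triangle (B m (S w)) (R w) (B n (S w))
      simp only [dist_eq_norm] at this h2
      linarith
    have h5 : ‖R w - B n (S w)‖ = ‖B n (S w) - R w‖ := norm_sub_rev _ _
    have h6 : ‖B n (S w) - B n (P x)‖ = ‖B n (P x) - B n (S w)‖ := norm_sub_rev _ _
    have e1 := est m
    have e2 := est n
    have e3 := key m hm
    have e4 := key n hn
    rw [h5, h6] at tri
    calc ‖B m (P x) - B n (P x)‖ ≤ _ := tri
      _ < ε := by linarith
  have hex : ∀ x, ∃ c, Filter.Tendsto (fun k => B k x) Filter.atTop (nhds c) :=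
    fun x => cauchySeq_tendsto_of_complete (hcauchy x)
  choose Cf hCf using hex
  have hCadd : ∀ x y, Cf (x + y) = Cf x + Cf y := by
    intro x y
    refine tendsto_nhds_unique (hCf (x + y)) ?_
    have : (fun k => B k (x + y)) = fun k => B k x + B k y := by
      funext k; rw [map_add]
    rw [this]
    exact (hCf x).add (hCf y)
  have hCsmul : ∀ (c : ℂ) x, Cf (c • x) = c • Cf x := by
    intro c x
    refine tendsto_nhds_unique (hCf (c • x)) ?_
    have : (fun k => B k (c • x)) = fun k => c • B k x := by
      funext k; exact map_smul (B k) c x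
    rw [this]
    exact (hCf x).const_smul c
  have hCbound : ∀ x, ‖Cf x‖ ≤ 1 * ‖x‖ := by
    intro x
    rw [one_mul]
    exact le_of_tendsto (hCf x).norm (Filter.Eventually.of_forall fun k => o3 k x)
  set Clin : H →ₗ[ℂ] H :=
    { toFun := Cf
      map_add' := hCadd
      map_smul' := hCsmul } with hClin
  set C : H →L[ℂ] H := Clin.mkContinuous 1 hCbound with hC
  have hC_apply : ∀ x, C x = Cf x := fun x => rfl
  refine ⟨C, ?_, ?_, ?_⟩
  · exact Clin.mkContinuous_norm_le zero_le_one hCbound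
  · intro u
    rw [hC_apply]
    refine tendsto_nhds_unique (hCf (S u)) ?_
    rw [← tendsto_sub_nhds_zero_iff]
    apply squeeze_zero_norm (o4 · u)
    have h1 : Filter.Tendsto (fun k : ℕ => 1 / ((k : ℝ) + 1)) Filter.atTop (nhds 0) :=
      tendsto_one_div_add_atTop_nhds_zero_nat
    have heq : (fun k : ℕ => 1 / (2 * ((k : ℝ) + 1)) * ‖u‖)
        = fun k : ℕ => (1 / 2 : ℝ) * (1 / ((k : ℝ) + 1) * ‖u‖) := by
      funext k
      have hk : ((k : ℝ) + 1) ≠ 0 := by positivity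
      field_simp
    rw [heq]
    simpa using (h1.mul_const ‖u‖).const_mul (1 / 2 : ℝ)
  · intro z hz
    rw [hC_apply]
    refine tendsto_nhds_unique (hCf z) ?_
    have : (fun k => B k z) = fun _ => (0 : H) := by
      funext k
      rw [hB_apply, o5 k z hz, map_zero]
    rw [this]
    exact tendsto_const_nhds

end POVMProof5

namespace POVMProof6
open POVMProof POVMProof2 POVMProof3 POVMProof4 POVMProof5

variable {X : Type*} [MeasurableSpace X]
variable {H : Type*} [NormedAddCommGroup H] [InnerProductSpace ℂ H] [CompleteSpace H]

set_option linter.unusedSectionVars false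
set_option synthInstance.maxHeartbeats 1000000
set_option maxHeartbeats 4000000

lemma gamma_exists (νi : POVM X H) (x₀ : X) :
    ∃ γ : POVM X H, γ.toFun Set.univ = 1 ∧ ∀ E : Set X, MeasurableSet E →
      CFC.sqrt (νi.toFun Set.univ) * γ.toFun E * CFC.sqrt (νi.toFun Set.univ) = νi.toFun E := by
  classical
  set T := νi.toFun Set.univ with hTdef
  have hT : 0 ≤ T := νi.pos' _ MeasurableSet.univ
  set S := CFC.sqrt T with hSdef
  have hSsa : IsSelfAdjoint S := sqrt_sa
  set K := (LinearMap.range (S : H →ₗ[ℂ] H)).topologicalClosure with hK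
  haveI : CompleteSpace K := (Submodule.isClosed_topologicalClosure _).completeSpace_coe
  set P : H →L[ℂ] H := K.subtypeL ∘L Submodule.orthogonalProjectionOnto K with hPdef
  have hPsa : IsSelfAdjoint P := isSelfAdjoint_starProjection K
  have hPmem : ∀ x, P x ∈ K := fun x => (Submodule.orthogonalProjectionOnto K x).2
  have hSx_mem : ∀ x, S x ∈ K := fun x =>
    Submodule.le_topologicalClosure _ (LinearMap.mem_range_self _ x)
  have hPK : ∀ x ∈ K, P x = x := by
    intro x hx
    have := Submodule.orthogonalProjectionOnto_mem_subspace_eq_self (K := K) ⟨x, hx⟩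
    exact congrArg Subtype.val this
  have hPS : ∀ x, P (S x) = S x := fun x => hPK _ (hSx_mem x)
  have hPP : P * P = P := by
    apply ContinuousLinearMap.ext
    intro x
    exact hPK _ (hPmem x)
  have hdense : ∀ u ∈ K, ∀ ε > 0, ∃ w : H, ‖u - S w‖ < ε := by
    intro u hu ε hε
    have h1 : u ∈ closure ((LinearMap.range (S : H →ₗ[ℂ] H) : Submodule ℂ H) : Set H) := by
      rw [← Submodule.topologicalClosure_coe]; exact hu
    rcases Metric.mem_closure_iff.mp h1 ε hε with ⟨b, hb, hdist⟩
    rcases hb with ⟨w, rfl⟩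
    exact ⟨w, by rwa [dist_eq_norm] at hdist⟩
  -- contractions
  have hCex : ∀ E : Set X, MeasurableSet E → ∃ C : H →L[ℂ] H, ‖C‖ ≤ 1 ∧
      (∀ u, C (S u) = CFC.sqrt (νi.toFun E) u) ∧ ∀ z, S z = 0 → C z = 0 :=
    fun E hE => exists_contraction hT (νi.pos' E hE) (povm_le_univ νi hE)
  choose! C hC1 hC2 hC3 using hCex
  set D : Set X → (H →L[ℂ] H) := fun E => ContinuousLinearMap.adjoint (C E) * C E with hDdef
  have hD0 : ∀ E, (0 : H →L[ℂ] H) ≤ D E := by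
    intro E
    rw [ContinuousLinearMap.nonneg_iff_isPositive]
    have := ContinuousLinearMap.isPositive_one.adjoint_conj (C E)
    exact ContinuousLinearMap.isPositive_adjoint_comp_self (C E)
  have hDsa : ∀ E, IsSelfAdjoint (D E) := fun E => IsSelfAdjoint.of_nonneg (hD0 E)
  have hDnorm : ∀ E, MeasurableSet E → ‖D E‖ ≤ 1 := by
    intro E hE
    have h1 : ‖D E‖ = ‖C E‖ * ‖C E‖ := ContinuousLinearMap.norm_adjoint_comp_self (C E)
    rw [h1]
    calc ‖C E‖ * ‖C E‖ ≤ 1 * 1 :=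
          mul_le_mul (hC1 E hE) (hC1 E hE) (norm_nonneg _) zero_le_one
      _ = 1 := one_mul 1
  have hDapp : ∀ E x y, ⟪D E x, y⟫_ℂ = ⟪C E x, C E y⟫_ℂ := by
    intro E x y
    rw [ContinuousLinearMap.mul_apply]
    exact ContinuousLinearMap.adjoint_inner_left (C E) y (C E x)
  have hform : ∀ E, MeasurableSet E → ∀ u v, ⟪D E (S u), S v⟫_ℂ = ⟪νi.toFun E u, v⟫_ℂ := by
    intro E hE u v
    rw [hDapp, hC2 E hE, hC2 E hE]
    exact inner_sqrt_sqrt (νi.pos' E hE) u v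
  have hCP : ∀ E, MeasurableSet E → C E * P = C E := by
    intro E hE
    apply ContinuousLinearMap.ext
    intro x
    rw [ContinuousLinearMap.mul_apply]
    have h0 : C E (x - P x) = 0 := by
      apply hC3 E hE
      have hmem : x - P x ∈ Kᗮ := Submodule.sub_starProjection_mem_orthogonal x
      have h1 : ⟪S (x - P x), S (x - P x)⟫_ℂ = 0 := by
        rw [sa_inner hSsa (x - P x) (S (x - P x))]
        have h2 : S (S (x - P x)) ∈ K := hSx_mem _
        have h3 := (Submodule.mem_orthogonal K (x - P x)).mp hmem _ h2
        rw [← inner_conj_symm, h3, map_zero]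
      exact inner_self_eq_zero.mp h1
    have h1 : C E x - C E (P x) = 0 := by
      rw [← map_sub]
      exact h0
    exact (sub_eq_zero.mp h1).symm
  have hDP : ∀ E, MeasurableSet E → D E * P = D E := by
    intro E hE
    rw [hDdef]
    simp only [mul_assoc]
    rw [hCP E hE]
  have hDadj : ∀ E, ContinuousLinearMap.adjoint (D E) = D E := fun E => (hDsa E)
  have hPD : ∀ E, MeasurableSet E → P * D E = D E := by
    intro E hE
    have h1 : ContinuousLinearMap.adjoint (D E * P) = P * D E := by
      rw [ContinuousLinearMap.mul_def, ContinuousLinearMap.adjoint_comp, hDadj,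
        hPsa.adjoint_eq, ContinuousLinearMap.mul_def]
    rw [← h1, hDP E hE, hDadj]
  -- uniqueness from forms
  have huniq : ∀ A B : H →L[ℂ] H, A * P = A → P * A = A → B * P = B → P * B = B →
      (∀ u v, ⟪A (S u), S v⟫_ℂ = ⟪B (S u), S v⟫_ℂ) → A = B := by
    intro A B hA1 hA2 hB1 hB2 hf
    have hKK : ∀ z ∈ K, ∀ w ∈ K, ⟪(A - B) z, w⟫_ℂ = 0 := by
      have hFcont : Continuous fun p : H × H => ⟪(A - B) p.1, p.2⟫_ℂ :=
        Continuous.inner ((A - B).continuous.comp continuous_fst) continuous_snd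
      have hclosed : IsClosed {p : H × H | ⟪(A - B) p.1, p.2⟫_ℂ = 0} :=
        isClosed_eq hFcont continuous_const
      have hsub : ((LinearMap.range (S : H →ₗ[ℂ] H) : Submodule ℂ H) : Set H) ×ˢ
          ((LinearMap.range (S : H →ₗ[ℂ] H) : Submodule ℂ H) : Set H)
          ⊆ {p : H × H | ⟪(A - B) p.1, p.2⟫_ℂ = 0} := by
        rintro ⟨z, w⟩ ⟨⟨u, rfl⟩, ⟨v, rfl⟩⟩
        simp only [Set.mem_setOf_eq, ContinuousLinearMap.sub_apply, inner_sub_left]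
        have := hf u v
        rw [sub_eq_zero]
        exact this
      have hKclos : ((K : Set H) ×ˢ (K : Set H))
          ⊆ {p : H × H | ⟪(A - B) p.1, p.2⟫_ℂ = 0} := by
        have h1 : (K : Set H) = closure ((LinearMap.range (S : H →ₗ[ℂ] H) : Submodule ℂ H) :
            Set H) := (Submodule.topologicalClosure_coe _).symm
        rw [h1, ← closure_prod_eq]
        exact closure_minimal hsub hclosed
      intro z hz w hw
      exact hKclos (Set.mk_mem_prod hz hw)
    apply op_ext
    intro x y
    have hAx : A x = A (P x) := by conv_lhs => rw [← hA1, ContinuousLinearMap.mul_apply]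
    have hBx : B x = B (P x) := by conv_lhs => rw [← hB1, ContinuousLinearMap.mul_apply]
    have hAP : ∀ u, A (P u) = P (A (P u)) := by
      intro u
      conv_lhs => rw [← hA2, ContinuousLinearMap.mul_apply]
    have hBP' : ∀ u, B (P u) = P (B (P u)) := by
      intro u
      conv_lhs => rw [← hB2, ContinuousLinearMap.mul_apply]
    have key := hKK (P x) (hPmem x) (P y) (hPmem y)
    simp only [ContinuousLinearMap.sub_apply, inner_sub_left, sub_eq_zero] at key
    have stepA : ⟪A (P x), y⟫_ℂ = ⟪A (P x), P y⟫_ℂ := by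
      conv_lhs => rw [hAP x]
      exact sa_inner hPsa _ y
    have stepB : ⟪B (P x), y⟫_ℂ = ⟪B (P x), P y⟫_ℂ := by
      conv_lhs => rw [hBP' x]
      exact sa_inner hPsa _ y
    calc ⟪A x, y⟫_ℂ = ⟪A (P x), y⟫_ℂ := by rw [← hAx]
      _ = ⟪A (P x), P y⟫_ℂ := stepA
      _ = ⟪B (P x), P y⟫_ℂ := key
      _ = ⟪B (P x), y⟫_ℂ := stepB.symm
      _ = ⟪B x, y⟫_ℂ := by rw [← hBx]
  -- basic values of D
  have hmeas_b : ∀ (E : ℕ → Set X), (∀ n, MeasurableSet (E n)) → ∀ s : Finset ℕ,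
      MeasurableSet (⋃ n ∈ s, E n) :=
    fun E hE s => MeasurableSet.biUnion s.countable_toSet fun n _ => hE n
  have hDempty : D ∅ = 0 := by
    refine huniq (D ∅) 0 (hDP ∅ MeasurableSet.empty) (hPD ∅ MeasurableSet.empty)
      (zero_mul P) (mul_zero P) ?_
    intro u v
    rw [hform ∅ MeasurableSet.empty, νi.empty']
    simp
  have hDuniv : D Set.univ = P := by
    refine huniq (D Set.univ) P (hDP _ MeasurableSet.univ) (hPD _ MeasurableSet.univ) hPP hPP ?_
    intro u v
    rw [hform _ MeasurableSet.univ]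
    rw [hPS u, ← hTdef]
    exact (inner_sqrt_sqrt hT u v).symm
  have hDadd : ∀ (E : ℕ → Set X), (∀ n, MeasurableSet (E n)) →
      Pairwise (Function.onFun Disjoint E) → ∀ s : Finset ℕ,
      D (⋃ n ∈ s, E n) = ∑ n ∈ s, D (E n) := by
    intro E hEm hdis s
    have hsum1 : (∑ n ∈ s, D (E n)) * P = ∑ n ∈ s, D (E n) := by
      rw [Finset.sum_mul]
      exact Finset.sum_congr rfl fun n _ => hDP _ (hEm n)
    have hsum2 : P * (∑ n ∈ s, D (E n)) = ∑ n ∈ s, D (E n) := by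
      rw [Finset.mul_sum]
      exact Finset.sum_congr rfl fun n _ => hPD _ (hEm n)
    refine huniq _ _ (hDP _ (hmeas_b E hEm s)) (hPD _ (hmeas_b E hEm s)) hsum1 hsum2 ?_
    intro u v
    rw [hform _ (hmeas_b E hEm s), povm_sum_finset νi E hEm hdis s,
      ContinuousLinearMap.sum_apply, sum_inner, ContinuousLinearMap.sum_apply, sum_inner]
    exact Finset.sum_congr rfl fun n _ => (hform _ (hEm n) u v).symm
  -- countable additivity of D
  have hred : ∀ F, MeasurableSet F → ∀ x y : H, ⟪D F x, y⟫_ℂ = ⟪D F (P x), P y⟫_ℂ := by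
    intro F hF x y
    have h1 : D F x = D F (P x) := by
      conv_lhs => rw [← hDP F hF, ContinuousLinearMap.mul_apply]
    have h2 : ⟪D F (P x), y⟫_ℂ = ⟪D F (P x), P y⟫_ℂ := by
      conv_lhs => rw [show D F (P x) = P (D F (P x)) by
        conv_lhs => rw [← hPD F hF, ContinuousLinearMap.mul_apply]]
      exact sa_inner hPsa _ y
    rw [h1, h2]
  have hDF_apply_le : ∀ F, MeasurableSet F → ∀ z : H, ‖D F z‖ ≤ ‖z‖ := by
    intro F hF z
    calc ‖D F z‖ ≤ ‖D F‖ * ‖z‖ := (D F).le_opNorm z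
      _ ≤ 1 * ‖z‖ := mul_le_mul_of_nonneg_right (hDnorm F hF) (norm_nonneg z)
      _ = ‖z‖ := one_mul _
  have hDhasSum : ∀ (E : ℕ → Set X), (∀ n, MeasurableSet (E n)) →
      Pairwise (Function.onFun Disjoint E) → ∀ x y : H,
      HasSum (fun n => ⟪D (E n) x, y⟫_ℂ) ⟪D (⋃ n, E n) x, y⟫_ℂ := by
    intro E hEm hdis x y
    have hmeasU : MeasurableSet (⋃ n, E n) := MeasurableSet.iUnion hEm
    have hfe : (fun n => ⟪D (E n) x, y⟫_ℂ) = fun n => ⟪D (E n) (P x), P y⟫_ℂ :=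
      funext fun n => hred _ (hEm n) x y
    rw [hfe, hred _ hmeasU x y]
    set x' := P x with hx'
    set y' := P y with hy'
    rw [show HasSum (fun n => ⟪D (E n) x', y'⟫_ℂ) ⟪D (⋃ n, E n) x', y'⟫_ℂ ↔
        Filter.Tendsto (fun s : Finset ℕ => ∑ n ∈ s, ⟪D (E n) x', y'⟫_ℂ)
        Filter.atTop (nhds ⟪D (⋃ n, E n) x', y'⟫_ℂ) from Iff.rfl]
    rw [Metric.tendsto_atTop]
    intro ε hε
    set δ : ℝ := min 1 (ε / (3 * (‖x'‖ + ‖y'‖ + 2))) with hδdef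
    have hδpos : 0 < δ := by
      apply lt_min one_pos
      positivity
    have hδ1 : δ ≤ 1 := min_le_left _ _
    have hδ2 : δ * (‖x'‖ + ‖y'‖ + 2) ≤ ε / 3 := by
      have h1 : δ ≤ ε / (3 * (‖x'‖ + ‖y'‖ + 2)) := min_le_right _ _
      have h2 : (0:ℝ) < ‖x'‖ + ‖y'‖ + 2 := by positivity
      calc δ * (‖x'‖ + ‖y'‖ + 2) ≤ ε / (3 * (‖x'‖ + ‖y'‖ + 2)) * (‖x'‖ + ‖y'‖ + 2) :=
            mul_le_mul_of_nonneg_right h1 (le_of_lt h2)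
        _ = ε / 3 := by field_simp
    obtain ⟨w1, hw1⟩ := hdense x' (hPmem x) δ hδpos
    obtain ⟨w2, hw2⟩ := hdense y' (hPmem y) δ hδpos
    have hSw1 : ‖S w1‖ ≤ ‖x'‖ + δ := by
      have h1 : ‖S w1‖ = ‖x' - (x' - S w1)‖ := by congr 1; abel
      rw [h1]
      calc ‖x' - (x' - S w1)‖ ≤ ‖x'‖ + ‖x' - S w1‖ := norm_sub_le _ _
        _ ≤ ‖x'‖ + δ := by linarith
    have hest : ∀ F, MeasurableSet F →
        ‖⟪D F x', y'⟫_ℂ - ⟪D F (S w1), S w2⟫_ℂ‖ ≤ ε / 3 := by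
      intro F hF
      have hsplit : ⟪D F x', y'⟫_ℂ - ⟪D F (S w1), S w2⟫_ℂ
          = ⟪D F (x' - S w1), y'⟫_ℂ + ⟪D F (S w1), y' - S w2⟫_ℂ := by
        rw [map_sub, inner_sub_left, inner_sub_right]
        ring
      rw [hsplit]
      have b1 : ‖⟪D F (x' - S w1), y'⟫_ℂ‖ ≤ δ * ‖y'‖ := by
        calc ‖⟪D F (x' - S w1), y'⟫_ℂ‖ ≤ ‖D F (x' - S w1)‖ * ‖y'‖ := norm_inner_le_norm _ _
          _ ≤ ‖x' - S w1‖ * ‖y'‖ :=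
              mul_le_mul_of_nonneg_right (hDF_apply_le F hF _) (norm_nonneg _)
          _ ≤ δ * ‖y'‖ := mul_le_mul_of_nonneg_right (le_of_lt hw1) (norm_nonneg _)
      have b2 : ‖⟪D F (S w1), y' - S w2⟫_ℂ‖ ≤ (‖x'‖ + δ) * δ := by
        calc ‖⟪D F (S w1), y' - S w2⟫_ℂ‖ ≤ ‖D F (S w1)‖ * ‖y' - S w2‖ := norm_inner_le_norm _ _
          _ ≤ ‖S w1‖ * ‖y' - S w2‖ :=
              mul_le_mul_of_nonneg_right (hDF_apply_le F hF _) (norm_nonneg _)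
          _ ≤ (‖x'‖ + δ) * δ := by
              apply mul_le_mul hSw1 (le_of_lt hw2) (norm_nonneg _)
              positivity
      calc ‖⟪D F (x' - S w1), y'⟫_ℂ + ⟪D F (S w1), y' - S w2⟫_ℂ‖
          ≤ ‖⟪D F (x' - S w1), y'⟫_ℂ‖ + ‖⟪D F (S w1), y' - S w2⟫_ℂ‖ := norm_add_le _ _
        _ ≤ δ * ‖y'‖ + (‖x'‖ + δ) * δ := add_le_add b1 b2
        _ ≤ δ * (‖x'‖ + ‖y'‖ + 2) := by nlinarith
        _ ≤ ε / 3 := hδ2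
    have hsum_w : HasSum (fun n => ⟪D (E n) (S w1), S w2⟫_ℂ)
        ⟪D (⋃ n, E n) (S w1), S w2⟫_ℂ := by
      have h1 := νi.additive' E hEm hdis w1 w2
      have hfe2 : (fun n => ⟪νi.toFun (E n) w1, w2⟫_ℂ)
          = fun n => ⟪D (E n) (S w1), S w2⟫_ℂ :=
        funext fun n => (hform _ (hEm n) w1 w2).symm
      rw [hfe2] at h1
      rwa [← hform _ hmeasU w1 w2] at h1
    obtain ⟨N, hN⟩ := Metric.tendsto_atTop.mp hsum_w (ε / 3) (by positivity)
    refine ⟨N, fun s hs => ?_⟩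
    have hps1 : ∑ n ∈ s, ⟪D (E n) x', y'⟫_ℂ = ⟪D (⋃ n ∈ s, E n) x', y'⟫_ℂ := by
      rw [hDadd E hEm hdis s, ContinuousLinearMap.sum_apply, sum_inner]
    have hps2 : ∑ n ∈ s, ⟪D (E n) (S w1), S w2⟫_ℂ = ⟪D (⋃ n ∈ s, E n) (S w1), S w2⟫_ℂ := by
      rw [hDadd E hEm hdis s, ContinuousLinearMap.sum_apply, sum_inner]
    have hNs := hN s hs
    rw [dist_eq_norm, hps2] at hNs
    rw [dist_eq_norm, hps1]
    have e1 := hest _ (hmeas_b E hEm s)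
    have e2 := hest _ hmeasU
    have tri : ⟪D (⋃ n ∈ s, E n) x', y'⟫_ℂ - ⟪D (⋃ n, E n) x', y'⟫_ℂ
        = (⟪D (⋃ n ∈ s, E n) x', y'⟫_ℂ - ⟪D (⋃ n ∈ s, E n) (S w1), S w2⟫_ℂ)
        + (⟪D (⋃ n ∈ s, E n) (S w1), S w2⟫_ℂ - ⟪D (⋃ n, E n) (S w1), S w2⟫_ℂ)
        + (⟪D (⋃ n, E n) (S w1), S w2⟫_ℂ - ⟪D (⋃ n, E n) x', y'⟫_ℂ) := by ring
    rw [tri]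
    have e2' : ‖⟪D (⋃ n, E n) (S w1), S w2⟫_ℂ - ⟪D (⋃ n, E n) x', y'⟫_ℂ‖
        = ‖⟪D (⋃ n, E n) x', y'⟫_ℂ - ⟪D (⋃ n, E n) (S w1), S w2⟫_ℂ‖ := norm_sub_rev _ _
    calc ‖_ + _ + _‖ ≤ ‖_ + _‖ + ‖_‖ := norm_add_le _ _
      _ ≤ ‖_‖ + ‖_‖ + ‖_‖ := by
          apply add_le_add_left
          exact norm_add_le _ _
      _ < ε := by
          rw [e2']
          linarith
  -- the complement projection
  set Q : H →L[ℂ] H := 1 - P with hQdef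
  have hQ0 : (0 : H →L[ℂ] H) ≤ Q := by
    rw [ContinuousLinearMap.nonneg_iff_isPositive]
    constructor
    · exact ContinuousLinearMap.isSelfAdjoint_iff_isSymmetric.mp ((IsSelfAdjoint.one (R := H →L[ℂ] H)).sub hPsa)
    · intro u
      show 0 ≤ RCLike.re ⟪Q u, u⟫_ℂ
      have hmem : u - P u ∈ Kᗮ := Submodule.sub_starProjection_mem_orthogonal u
      have h2 : ⟪u - P u, P u⟫_ℂ = 0 := by
        have h3 := (Submodule.mem_orthogonal K (u - P u)).mp hmem _ (hPmem u)
        rw [← inner_conj_symm, h3, map_zero]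
      have h5 : Q u = u - P u := by
        rw [hQdef, ContinuousLinearMap.sub_apply, ContinuousLinearMap.one_apply]
      have h4 : ⟪u - P u, u - P u⟫_ℂ = ⟪Q u, u⟫_ℂ := by
        have h6 : ⟪u - P u, u - P u⟫_ℂ = ⟪u - P u, u⟫_ℂ - ⟪u - P u, P u⟫_ℂ := by
          rw [inner_sub_right]
        rw [h6, h2, sub_zero, h5]
      rw [← h4, inner_self_eq_norm_sq]
      positivity
  -- gamma
  set γf : Set X → (H →L[ℂ] H) := fun E => D E + (if x₀ ∈ E then Q else 0) with hγf
  have hγadd : ∀ (E : ℕ → Set X), (∀ n, MeasurableSet (E n)) →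
      Pairwise (Function.onFun Disjoint E) → ∀ x y : H,
      HasSum (fun n => ⟪γf (E n) x, y⟫_ℂ) ⟪γf (⋃ n, E n) x, y⟫_ℂ := by
    intro E hEm hdis x y
    have h1 := hDhasSum E hEm hdis x y
    have h2 : HasSum (fun n => ⟪(if x₀ ∈ E n then Q else 0) x, y⟫_ℂ)
        ⟪(if x₀ ∈ ⋃ n, E n then Q else 0) x, y⟫_ℂ := by
      by_cases hx0 : x₀ ∈ ⋃ n, E n
      · obtain ⟨n₀, hn₀⟩ := Set.mem_iUnion.mp hx0
        rw [if_pos hx0]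
        have hfe : (fun n => ⟪(if x₀ ∈ E n then Q else 0) x, y⟫_ℂ)
            = fun n => if n = n₀ then ⟪Q x, y⟫_ℂ else 0 := by
          funext n
          by_cases hn : n = n₀
          · subst hn
            rw [if_pos hn₀, if_pos rfl]
          · have hx0n : x₀ ∉ E n := fun hmem => Set.disjoint_left.mp (hdis hn) hmem hn₀
            rw [if_neg hx0n, if_neg hn]
            simp
        rw [hfe]
        exact hasSum_ite_eq n₀ _
      · rw [if_neg hx0]
        have hfe : (fun n => ⟪(if x₀ ∈ E n then Q else 0) x, y⟫_ℂ) = fun _ => (0 : ℂ) := by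
          funext n
          have hnn : x₀ ∉ E n := fun hmem => hx0 (Set.mem_iUnion.mpr ⟨n, hmem⟩)
          rw [if_neg hnn]
          simp
        rw [hfe]
        simpa using (hasSum_zero : HasSum (fun _ : ℕ => (0:ℂ)) 0)
    have h3 := h1.add h2
    have hfe2 : (fun n => ⟪γf (E n) x, y⟫_ℂ)
        = fun n => ⟪D (E n) x, y⟫_ℂ + ⟪(if x₀ ∈ E n then Q else 0) x, y⟫_ℂ := by
      funext n
      rw [hγf]
      simp only [ContinuousLinearMap.add_apply, inner_add_left]
    have hfe3 : ⟪γf (⋃ n, E n) x, y⟫_ℂ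
        = ⟪D (⋃ n, E n) x, y⟫_ℂ + ⟪(if x₀ ∈ ⋃ n, E n then Q else 0) x, y⟫_ℂ := by
      rw [hγf]
      simp only [ContinuousLinearMap.add_apply, inner_add_left]
    rw [hfe2, hfe3]
    exact h3
  refine ⟨⟨γf, ?_, ?_, hγadd⟩, ?_, ?_⟩
  · rw [hγf]
    simp [hDempty]
  · intro E hE
    rw [hγf]
    simp only
    apply add_nonneg (hD0 E)
    by_cases h : x₀ ∈ E
    · rw [if_pos h]; exact hQ0
    · rw [if_neg h]
  · show γf Set.univ = 1
    rw [hγf]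
    simp only [Set.mem_univ, if_pos, hDuniv, hQdef]
    abel
  · intro E hE
    show S * γf E * S = νi.toFun E
    have hSDS : S * D E * S = νi.toFun E := by
      apply op_ext
      intro u v
      have happ : (S * D E * S) u = S (D E (S u)) := rfl
      rw [happ, sa_inner hSsa (D E (S u)) v]
      exact hform E hE u v
    have hQS : Q * S = 0 := by
      apply ContinuousLinearMap.ext
      intro x
      rw [ContinuousLinearMap.mul_apply, hQdef, ContinuousLinearMap.sub_apply,
        ContinuousLinearMap.one_apply, hPS, sub_self, ContinuousLinearMap.zero_apply]
    have hSQS : S * Q * S = 0 := by rw [mul_assoc, hQS, mul_zero]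
    rw [hγf]
    simp only
    rw [mul_add, add_mul]
    by_cases h : x₀ ∈ E
    · rw [if_pos h, hSQS, add_zero, hSDS]
    · rw [if_neg h, mul_zero, zero_mul, add_zero, hSDS]

end POVMProof6


open POVMProof POVMProof2 POVMProof6 in
set_option synthInstance.maxHeartbeats 1000000 in
/-- If a quantum probability measure `ν` decomposes as `ν = ν₁ + ⋯ + ν_n` for POVMs `ν_i`,
then there are quantum probability measures `γ_i` with
`ν(E) = Σ_i ν_i(X)^{1/2} γ_i(E) ν_i(X)^{1/2}`, a C*-convex combination
(indeed `Σ_i ν_i(X) = I`). -/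
theorem quantum_probability_measure_cstar_convex_decomposition {X : Type*} [MeasurableSpace X]
    {H : Type*} [NormedAddCommGroup H] [InnerProductSpace ℂ H] [CompleteSpace H]
    {n : ℕ} (ν : POVM X H) (νs : Fin n → POVM X H)
    (hν1 : ν.toFun Set.univ = 1)
    (hsum : ∀ E : Set X, MeasurableSet E → ν.toFun E = ∑ i, (νs i).toFun E) :
    (∑ i, (νs i).toFun Set.univ = 1) ∧
    ∃ γ : Fin n → POVM X H, (∀ i, (γ i).toFun Set.univ = 1) ∧
      ∀ E : Set X, MeasurableSet E →
        ν.toFun E = ∑ i, CFC.sqrt ((νs i).toFun Set.univ) * (γ i).toFun E *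
          CFC.sqrt ((νs i).toFun Set.univ) := by
    classical
  have conj1 : ∑ i, (νs i).toFun Set.univ = 1 :=
    (hsum Set.univ MeasurableSet.univ).symm.trans hν1
  refine ⟨conj1, ?_⟩
  rcases isEmpty_or_nonempty X with hX | hX
  · haveI : Subsingleton (H →L[ℂ] H) := by
      have h0 : (0 : H →L[ℂ] H) = 1 := by
        rw [← hν1, show (Set.univ : Set X) = ∅ from Set.univ_eq_empty_iff.mpr hX, ν.empty']
      exact subsingleton_of_zero_eq_one h0
    exact ⟨fun _ => ν, fun i => Subsingleton.elim _ _, fun E hE => Subsingleton.elim _ _⟩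
  · obtain ⟨x₀⟩ := hX
    choose γ hγ1 hγ2 using fun i => gamma_exists (νs i) x₀
    refine ⟨γ, hγ1, fun E hE => ?_⟩
    rw [hsum E hE]
    exact Finset.sum_congr rfl fun i _ => (hγ2 i E hE).symm
end

section
/- Every POVM ν : Borel(X) → B(H) can be written uniquely as ν = ν_a + ν_na where ν_a is an atomic POVM and ν_na is a nonatomic POVM. -/
open scoped InnerProductSpace
open MeasureTheory

/-- `A` is an atom of the POVM `ν`: a measurable set of nonzero measure each of whose
measurable subsets has measure `0` or measure `ν(A)`. -/
def POVM.IsAtomOf {X : Type*} [MeasurableSpace X] {H : Type*} [NormedAddCommGroup H]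
    [InnerProductSpace ℂ H] [CompleteSpace H] (ν : POVM X H) (A : Set X) : Prop :=
  MeasurableSet A ∧ ν.toFun A ≠ 0 ∧
    ∀ B : Set X, B ⊆ A → MeasurableSet B → ν.toFun B = 0 ∨ ν.toFun B = ν.toFun A

/-- A POVM is atomic if every measurable set of nonzero measure contains an atom. -/
def POVM.Atomic {X : Type*} [MeasurableSpace X] {H : Type*} [NormedAddCommGroup H]
    [InnerProductSpace ℂ H] [CompleteSpace H] (ν : POVM X H) : Prop :=
  ∀ E : Set X, MeasurableSet E → ν.toFun E ≠ 0 → ∃ A : Set X, A ⊆ E ∧ ν.IsAtomOf A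

/-- A POVM is nonatomic if it has no atoms. -/
def POVM.Nonatomic {X : Type*} [MeasurableSpace X] {H : Type*} [NormedAddCommGroup H]
    [InnerProductSpace ℂ H] [CompleteSpace H] (ν : POVM X H) : Prop :=
  ∀ A : Set X, ¬ ν.IsAtomOf A

set_option linter.unusedSectionVars false

namespace PovmAux

variable {X : Type*} [MeasurableSpace X] {H : Type*} [NormedAddCommGroup H]
    [InnerProductSpace ℂ H] [CompleteSpace H]

/-- the quadratic form of `ν` on set `E` at vector `x` -/
noncomputable def q (ν : POVM X H) (E : Set X) (x : H) : ℝ :=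
  RCLike.re ⟪ν.toFun E x, x⟫_ℂ

lemma q_nonneg (ν : POVM X H) {E : Set X} (hE : MeasurableSet E) (x : H) :
    0 ≤ q ν E x := by
  have h := ((ContinuousLinearMap.nonneg_iff_isPositive _).1 (ν.pos' E hE)).2 x
  simpa [q, ContinuousLinearMap.reApplyInnerSelf] using h

lemma povm_ext {ν : POVM X H} {A : Set X} {T : H →L[ℂ] H}
    (h : ∀ x y : H, ⟪ν.toFun A x, y⟫_ℂ = ⟪T x, y⟫_ℂ) : ν.toFun A = T := by
  ext x
  exact ext_inner_right ℂ (h x)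

lemma op_eq_zero_of_inner {T : H →L[ℂ] H} (h : ∀ x y : H, ⟪T x, y⟫_ℂ = 0) : T = 0 := by
  ext x
  exact ext_inner_right ℂ (fun y => by simpa using h x y)

/-- A positive operator with vanishing (real part of the) quadratic form is zero. -/
lemma eq_zero_of_q_zero (ν : POVM X H) {E : Set X} (hE : MeasurableSet E)
    (h : ∀ x : H, q ν E x = 0) : ν.toFun E = 0 := by
  have hpos := (ContinuousLinearMap.nonneg_iff_isPositive _).1 (ν.pos' E hE)
  have hc := (ContinuousLinearMap.isPositive_iff_complex _).1 hpos
  have hz : ∀ x : H, ⟪ν.toFun E x, x⟫_ℂ = 0 := by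
    intro x
    have h1 := (hc x).1
    have h2 : RCLike.re ⟪ν.toFun E x, x⟫_ℂ = 0 := h x
    rw [← h1, h2]
    simp
  have := (inner_map_self_eq_zero (ν.toFun E).toLinearMap).1 hz
  ext x
  have := congrArg (fun f => f x) this
  simpa using this

lemma q_zero_of_eq_zero {ν : POVM X H} {E : Set X} (h : ν.toFun E = 0) (x : H) :
    q ν E x = 0 := by simp [q, h]

/-- finite (binary) additivity -/
lemma union_two (ν : POVM X H) {A B : Set X} (hA : MeasurableSet A) (hB : MeasurableSet B)
    (hd : Disjoint A B) : ν.toFun (A ∪ B) = ν.toFun A + ν.toFun B := by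
  classical
  set E : ℕ → Set X := fun n => if n = 0 then A else if n = 1 then B else ∅ with hEdef
  have hmeas : ∀ n, MeasurableSet (E n) := by
    intro n
    simp only [hEdef]
    split_ifs <;> simp [hA, hB]
  have hdisj : Pairwise (Function.onFun Disjoint E) := by
    intro i j hij
    simp only [Function.onFun, hEdef]
    split_ifs with h1 h2 h3 h4 h5 <;>
      first
        | (exfalso; omega)
        | exact hd
        | exact hd.symm
        | simp
  have hU : (⋃ n, E n) = A ∪ B := by
    apply Set.Subset.antisymm
    · intro x hx
      rcases Set.mem_iUnion.1 hx with ⟨n, hn⟩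
      by_cases h0 : n = 0
      · subst h0; simp only [hEdef, if_pos rfl] at hn; exact Or.inl hn
      · by_cases h1 : n = 1
        · subst h1; simp only [hEdef] at hn; norm_num at hn; exact Or.inr hn
        · simp only [hEdef, if_neg h0, if_neg h1] at hn; exact absurd hn (Set.notMem_empty x)
    · intro x hx
      rcases hx with hx | hx
      · exact Set.mem_iUnion.2 ⟨0, by simp [hEdef, hx]⟩
      · exact Set.mem_iUnion.2 ⟨1, by simp [hEdef, hx]⟩
  apply povm_ext
  intro x y
  have hsum := ν.additive' E hmeas hdisj x y
  rw [hU] at hsum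
  have hfin : HasSum (fun n => ⟪ν.toFun (E n) x, y⟫_ℂ)
      (∑ n ∈ ({0, 1} : Finset ℕ), ⟪ν.toFun (E n) x, y⟫_ℂ) := by
    apply hasSum_sum_of_ne_finset_zero
    intro n hn
    simp only [Finset.mem_insert, Finset.mem_singleton] at hn
    push_neg at hn
    have : E n = ∅ := by simp [hEdef, hn.1, hn.2]
    simp [this, ν.empty']
  have := hsum.unique hfin
  rw [this]
  have h0 : E 0 = A := by simp [hEdef]
  have h1 : E 1 = B := by simp [hEdef]
  rw [Finset.sum_insert (by simp), Finset.sum_singleton, h0, h1]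
  simp [ContinuousLinearMap.add_apply, inner_add_left]

lemma diff_eq (ν : POVM X H) {A B : Set X} (hA : MeasurableSet A) (hB : MeasurableSet B)
    (hBA : B ⊆ A) : ν.toFun A = ν.toFun B + ν.toFun (A \ B) := by
  have h1 : B ∪ (A \ B) = A := Set.union_diff_cancel hBA
  have h2 := union_two ν hB (hA.diff hB) Set.disjoint_sdiff_right
  rwa [h1] at h2

lemma q_add {ν ν₁ ν₂ : POVM X H} {A B C : Set X}
    (h : ν.toFun C = ν₁.toFun A + ν₂.toFun B) (x : H) :
    q ν C x = q ν₁ A x + q ν₂ B x := by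
  simp [q, h, ContinuousLinearMap.add_apply, inner_add_left]

/-- monotonicity of the quadratic form -/
lemma q_mono (ν : POVM X H) {A B : Set X} (hA : MeasurableSet A) (hB : MeasurableSet B)
    (hBA : B ⊆ A) (x : H) : q ν B x ≤ q ν A x := by
  rw [q_add (diff_eq ν hA hB hBA) x]
  have := q_nonneg ν (hA.diff hB) x
  linarith

/-- a measurable subset of a null set is null -/
lemma null_mono (ν : POVM X H) {A B : Set X} (hA : MeasurableSet A) (hB : MeasurableSet B)
    (hBA : B ⊆ A) (h : ν.toFun A = 0) : ν.toFun B = 0 := by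
  apply eq_zero_of_q_zero ν hB
  intro x
  have h1 := q_mono ν hA hB hBA x
  have h2 := q_nonneg ν hB x
  rw [q_zero_of_eq_zero h x] at h1
  linarith

/-- for `B ⊆ A`, `ν B = ν A` iff `ν (A \ B) = 0` -/
lemma eq_iff_diff_null (ν : POVM X H) {A B : Set X} (hA : MeasurableSet A)
    (hB : MeasurableSet B) (hBA : B ⊆ A) :
    ν.toFun B = ν.toFun A ↔ ν.toFun (A \ B) = 0 := by
  have h := diff_eq ν hA hB hBA
  constructor
  · intro he
    rw [← he] at h
    have := h.symm
    rwa [add_eq_left] at this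
  · intro he
    rw [he, add_zero] at h
    exact h.symm

/-- countable unions of null sets are null -/
lemma null_iUnion (ν : POVM X H) {C : ℕ → Set X} (hC : ∀ n, MeasurableSet (C n))
    (h : ∀ n, ν.toFun (C n) = 0) : ν.toFun (⋃ n, C n) = 0 := by
  have hDmeas : ∀ n, MeasurableSet (disjointed C n) := MeasurableSet.disjointed hC
  have hDnull : ∀ n, ν.toFun (disjointed C n) = 0 := fun n =>
    null_mono ν (hC n) (hDmeas n) (disjointed_subset C n) (h n)
  apply op_eq_zero_of_inner
  intro x y
  have hsum := ν.additive' (disjointed C) hDmeas (disjoint_disjointed C) x y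
  rw [iUnion_disjointed] at hsum
  have h0 : HasSum (fun n => ⟪ν.toFun (disjointed C n) x, y⟫_ℂ) 0 := by
    convert hasSum_zero with n
    simp [hDnull n]
  exact hsum.unique h0

end PovmAux

section Scalar

variable {X : Type*} [MeasurableSpace X] {H : Type*} [NormedAddCommGroup H]
    [InnerProductSpace ℂ H] [CompleteSpace H] [TopologicalSpace.SeparableSpace H]

/-- a dense sequence in `H` -/
noncomputable def xs (H : Type*) [NormedAddCommGroup H]
    [InnerProductSpace ℂ H] [TopologicalSpace.SeparableSpace H] : ℕ → H :=
  @TopologicalSpace.denseSeq H _ _ ⟨0⟩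

lemma denseRange_xs : DenseRange (xs H) :=
  @TopologicalSpace.denseRange_denseSeq H _ _ ⟨0⟩

/-- the weight used in the scalar shadow -/
noncomputable def w (H : Type*) [NormedAddCommGroup H]
    [InnerProductSpace ℂ H] [TopologicalSpace.SeparableSpace H] (n : ℕ) : ℝ :=
  (1/2)^n / (1 + ‖xs H n‖^2)

lemma w_pos (n : ℕ) : 0 < w H n := by
  apply div_pos (by positivity)
  positivity

/-- the scalar shadow of a POVM -/
noncomputable def m (ν : POVM X H) (E : Set X) : ℝ :=
  ∑' n, w H n * PovmAux.q ν E (xs H n)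

lemma q_le_norm (ν : POVM X H) (E : Set X) (x : H) :
    PovmAux.q ν E x ≤ ‖ν.toFun E‖ * ‖x‖^2 := by
  unfold PovmAux.q
  calc RCLike.re ⟪ν.toFun E x, x⟫_ℂ ≤ ‖⟪ν.toFun E x, x⟫_ℂ‖ := RCLike.re_le_norm _
    _ ≤ ‖ν.toFun E x‖ * ‖x‖ := norm_inner_le_norm _ _
    _ ≤ (‖ν.toFun E‖ * ‖x‖) * ‖x‖ := by
        gcongr
        exact (ν.toFun E).le_opNorm x
    _ = ‖ν.toFun E‖ * ‖x‖^2 := by ring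

lemma m_summable (ν : POVM X H) {E : Set X} (hE : MeasurableSet E) :
    Summable (fun n => w H n * PovmAux.q ν E (xs H n)) := by
  apply Summable.of_nonneg_of_le
  · intro n
    exact mul_nonneg (w_pos n).le (PovmAux.q_nonneg ν hE _)
  · intro n
    show w H n * PovmAux.q ν E (xs H n) ≤ (1/2)^n * ‖ν.toFun E‖
    have h1 := q_le_norm ν E (xs H n)
    have h2 : (0:ℝ) < 1 + ‖xs H n‖^2 := by positivity
    rw [w, div_mul_eq_mul_div, div_le_iff₀ h2]
    have h3 : (0:ℝ) ≤ ‖ν.toFun E‖ := norm_nonneg _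
    have h4 : (0:ℝ) ≤ (1/2:ℝ)^n := by positivity
    nlinarith [PovmAux.q_nonneg ν hE (xs H n)]
  · exact (summable_geometric_two).mul_right _

lemma m_nonneg (ν : POVM X H) {E : Set X} (hE : MeasurableSet E) : 0 ≤ m ν E :=
  tsum_nonneg fun n => mul_nonneg (w_pos n).le (PovmAux.q_nonneg ν hE _)

lemma m_eq_zero_of (ν : POVM X H) {E : Set X} (h : ν.toFun E = 0) : m ν E = 0 := by
  unfold m
  convert tsum_zero with n
  rw [PovmAux.q_zero_of_eq_zero h, mul_zero]

lemma povm_eq_zero_of_m (ν : POVM X H) {E : Set X} (hE : MeasurableSet E)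
    (h : m ν E = 0) : ν.toFun E = 0 := by
  have hs := m_summable ν hE
  have hterm : ∀ n, w H n * PovmAux.q ν E (xs H n) = 0 := by
    intro n
    have h1 : w H n * PovmAux.q ν E (xs H n) ≤ m ν E :=
      Summable.le_tsum hs n (fun k _ => mul_nonneg (w_pos k).le (PovmAux.q_nonneg ν hE _))
    have h2 : 0 ≤ w H n * PovmAux.q ν E (xs H n) :=
      mul_nonneg (w_pos n).le (PovmAux.q_nonneg ν hE _)
    rw [h] at h1
    linarith
  have hq0 : ∀ n, PovmAux.q ν E (xs H n) = 0 := by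
    intro n
    have := hterm n
    have hw := (w_pos (H := H) n).ne'
    exact (mul_eq_zero.1 this).resolve_left hw
  -- extend by continuity to all of H
  have hcont : Continuous (fun x => PovmAux.q ν E x) := by
    have := (ν.toFun E).reApplyInnerSelf_continuous
    convert this using 1
    funext x
    simp [PovmAux.q, ContinuousLinearMap.reApplyInnerSelf_apply]
  have heq : (fun x => PovmAux.q ν E x) = (fun _ => (0:ℝ)) := by
    have hd : Dense (Set.range (xs H)) := denseRange_xs (H := H)
    apply Continuous.ext_on hd hcont continuous_const
    rintro x ⟨n, rfl⟩
    exact hq0 n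
  exact PovmAux.eq_zero_of_q_zero ν hE (fun x => congrFun heq x)

lemma m_zero_iff (ν : POVM X H) {E : Set X} (hE : MeasurableSet E) :
    m ν E = 0 ↔ ν.toFun E = 0 :=
  ⟨povm_eq_zero_of_m ν hE, m_eq_zero_of ν⟩

lemma m_union (ν : POVM X H) {A B : Set X} (hA : MeasurableSet A) (hB : MeasurableSet B)
    (hd : Disjoint A B) : m ν (A ∪ B) = m ν A + m ν B := by
  unfold m
  rw [← Summable.tsum_add (m_summable ν hA) (m_summable ν hB)]
  congr 1
  funext n
  rw [PovmAux.q_add (PovmAux.union_two ν hA hB hd) (xs H n)]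
  ring

lemma m_diff (ν : POVM X H) {A B : Set X} (hA : MeasurableSet A) (hB : MeasurableSet B)
    (hBA : B ⊆ A) : m ν A = m ν B + m ν (A \ B) := by
  have h1 : B ∪ (A \ B) = A := Set.union_diff_cancel hBA
  have h2 := m_union ν hB (hA.diff hB) Set.disjoint_sdiff_right
  rwa [h1] at h2

lemma m_mono (ν : POVM X H) {A B : Set X} (hA : MeasurableSet A) (hB : MeasurableSet B)
    (hBA : B ⊆ A) : m ν B ≤ m ν A := by
  rw [m_diff ν hA hB hBA]
  have := m_nonneg ν (hA.diff hB)
  linarith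

/-- termwise comparison: if the quadratic forms of `ν₁` are dominated by those of `ν₂`. -/
lemma m_le_m (ν₁ ν₂ : POVM X H) {E : Set X} (hE : MeasurableSet E)
    (h : ∀ x, PovmAux.q ν₁ E x ≤ PovmAux.q ν₂ E x) : m ν₁ E ≤ m ν₂ E :=
  Summable.tsum_le_tsum (fun n => by
      have := h (xs H n)
      have hw := (w_pos (H := H) n).le
      nlinarith [w_pos (H := H) n])
    (m_summable ν₁ hE) (m_summable ν₂ hE)

/-- measure-theoretic atom formulation -/
def MAtom (ν : POVM X H) (A : Set X) : Prop :=
  MeasurableSet A ∧ ν.toFun A ≠ 0 ∧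
    ∀ B : Set X, B ⊆ A → MeasurableSet B → ν.toFun B = 0 ∨ ν.toFun (A \ B) = 0

lemma isAtomOf_iff_mAtom (ν : POVM X H) (A : Set X) : ν.IsAtomOf A ↔ MAtom ν A := by
  unfold POVM.IsAtomOf MAtom
  constructor
  · rintro ⟨hA, hne, h⟩
    refine ⟨hA, hne, fun B hBA hB => ?_⟩
    rcases h B hBA hB with h0 | he
    · exact Or.inl h0
    · exact Or.inr ((PovmAux.eq_iff_diff_null ν hA hB hBA).1 he)
  · rintro ⟨hA, hne, h⟩
    refine ⟨hA, hne, fun B hBA hB => ?_⟩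
    rcases h B hBA hB with h0 | he
    · exact Or.inl h0
    · exact Or.inr ((PovmAux.eq_iff_diff_null ν hA hB hBA).2 he)

lemma mAtom_subset {ν : POVM X H} {A C : Set X} (hA : MAtom ν A) (hCA : C ⊆ A)
    (hC : MeasurableSet C) (hne : ν.toFun C ≠ 0) : MAtom ν C := by
  obtain ⟨hAm, -, h⟩ := hA
  refine ⟨hC, hne, fun B hBC hB => ?_⟩
  rcases h B (hBC.trans hCA) hB with h0 | hd
  · exact Or.inl h0
  · refine Or.inr (PovmAux.null_mono ν (hAm.diff hB) (hC.diff hB) ?_ hd)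
    exact Set.diff_subset_diff_left hCA

/-- countable unions of atoms (or empty sets) -/
def CU (ν : POVM X H) (U : Set X) : Prop :=
  ∃ f : ℕ → Set X, (∀ n, f n = ∅ ∨ MAtom ν (f n)) ∧ U = ⋃ n, f n

lemma CU_measurable {ν : POVM X H} {U : Set X} (h : CU ν U) : MeasurableSet U := by
  obtain ⟨f, hf, rfl⟩ := h
  exact MeasurableSet.iUnion fun n => by
    rcases hf n with h | h
    · rw [h]; exact MeasurableSet.empty
    · exact h.1

lemma CU_empty (ν : POVM X H) : CU ν ∅ :=
  ⟨fun _ => ∅, fun _ => Or.inl rfl, by simp⟩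

lemma CU_iUnion {ν : POVM X H} {U : ℕ → Set X} (h : ∀ k, CU ν (U k)) :
    CU ν (⋃ k, U k) := by
  choose f hf hU using h
  refine ⟨fun n => f n.unpair.1 n.unpair.2, fun n => hf _ _, ?_⟩
  rw [Set.iUnion_unpair (fun i j => f i j)]
  exact Set.iUnion_congr hU

lemma CU_union_atom {ν : POVM X H} {U A : Set X} (hU : CU ν U) (hA : MAtom ν A) :
    CU ν (U ∪ A) := by
  obtain ⟨f, hf, rfl⟩ := hU
  refine ⟨fun n => Nat.casesOn n A f, fun n => by cases n with
    | zero => exact Or.inr hA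
    | succ k => exact hf k, ?_⟩
  ext x
  simp only [Set.mem_union, Set.mem_iUnion]
  constructor
  · rintro (⟨n, hn⟩ | hx)
    · exact ⟨n + 1, hn⟩
    · exact ⟨0, hx⟩
  · rintro ⟨n, hn⟩
    cases n with
    | zero => exact Or.inr hn
    | succ k => exact Or.inl ⟨k, hn⟩

/-- existence of a maximal countable union of atoms -/
lemma exists_S (ν : POVM X H) :
    ∃ S : Set X, ∃ f : ℕ → Set X, (∀ n, f n = ∅ ∨ MAtom ν (f n)) ∧ S = ⋃ n, f n ∧
      ∀ A : Set X, MAtom ν A → ¬ (A ⊆ Sᶜ) := by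
  set T : Set ℝ := {r | ∃ U, CU ν U ∧ m ν U = r} with hT
  have hTne : (0:ℝ) ∈ T := ⟨∅, CU_empty ν, m_eq_zero_of ν ν.empty'⟩
  have hTbdd : BddAbove T := by
    refine ⟨m ν Set.univ, ?_⟩
    rintro r ⟨U, hU, rfl⟩
    exact m_mono ν MeasurableSet.univ (CU_measurable hU) (Set.subset_univ U)
  set t := sSup T with ht
  have hpick : ∀ k : ℕ, ∃ U, CU ν U ∧ t - 1/(k+1) < m ν U := by
    intro k
    have hlt : t - 1/(k+1) < t := by
      have : (0:ℝ) < 1/(k+1) := by positivity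
      linarith
    obtain ⟨r, ⟨U, hU, rfl⟩, hr⟩ := exists_lt_of_lt_csSup ⟨0, hTne⟩ hlt
    exact ⟨U, hU, hr⟩
  choose U hCU hmU using hpick
  set S := ⋃ k, U k with hS
  have hCUS : CU ν S := CU_iUnion hCU
  obtain ⟨f, hf, hSf⟩ := hCUS
  have hSmeas : MeasurableSet S := CU_measurable ⟨f, hf, hSf⟩
  have hmS_le : m ν S ≤ t := le_csSup hTbdd ⟨S, ⟨f, hf, hSf⟩, rfl⟩
  have hmS_ge : t ≤ m ν S := by
    by_contra hc
    push_neg at hc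
    obtain ⟨k, hk⟩ := exists_nat_one_div_lt (sub_pos.2 hc)
    have h1 : m ν (U k) ≤ m ν S :=
      m_mono ν hSmeas (CU_measurable (hCU k)) (Set.subset_iUnion U k)
    have h2 := hmU k
    push_cast at hk
    linarith
  refine ⟨S, f, hf, hSf, ?_⟩
  rintro A hA hAS
  have hAm := hA.1
  have hdisj : Disjoint S A := Set.disjoint_of_subset_right hAS disjoint_compl_right
  have hCU' : CU ν (S ∪ A) := CU_union_atom ⟨f, hf, hSf⟩ hA
  have hm : m ν (S ∪ A) = m ν S + m ν A := m_union ν hSmeas hAm hdisj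
  have hmA : 0 < m ν A := by
    rcases lt_or_eq_of_le (m_nonneg ν hAm) with h | h
    · exact h
    · exact absurd (povm_eq_zero_of_m ν hAm h.symm) hA.2.1
  have hle : m ν (S ∪ A) ≤ t := le_csSup hTbdd ⟨S ∪ A, hCU', rfl⟩
  linarith

/-- restriction of a POVM to a measurable set -/
noncomputable def restrict (ν : POVM X H) (S : Set X) (hS : MeasurableSet S) : POVM X H where
  toFun := fun E => ν.toFun (E ∩ S)
  empty' := by show ν.toFun (∅ ∩ S) = 0; rw [Set.empty_inter]; exact ν.empty'
  pos' := fun E hE => ν.pos' (E ∩ S) (hE.inter hS)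
  additive' := by
    intro E hE hd x y
    have hsum := ν.additive' (fun n => E n ∩ S) (fun n => (hE n).inter hS)
      (fun i j hij => ((hd hij).mono (Set.inter_subset_left) (Set.inter_subset_left))) x y
    rwa [← Set.iUnion_inter] at hsum

@[simp] lemma restrict_apply (ν : POVM X H) (S : Set X) (hS : MeasurableSet S) (E : Set X) :
    (restrict ν S hS).toFun E = ν.toFun (E ∩ S) := rfl

lemma restrict_eq_of_subset (ν : POVM X H) {S : Set X} (hS : MeasurableSet S) {E : Set X}
    (h : E ⊆ S) : (restrict ν S hS).toFun E = ν.toFun E := by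
  rw [restrict_apply, Set.inter_eq_self_of_subset_left h]

end Scalar

section Main

variable {X : Type*} [MeasurableSpace X] {H : Type*} [NormedAddCommGroup H]
    [InnerProductSpace ℂ H] [CompleteSpace H] [TopologicalSpace.SeparableSpace H]

/-- both parts of a decomposition vanish on null sets of the total -/
lemma parts_null {ν νa' νna' : POVM X H}
    (hsum : ∀ E : Set X, MeasurableSet E → ν.toFun E = νa'.toFun E + νna'.toFun E)
    {E : Set X} (hE : MeasurableSet E) (h : ν.toFun E = 0) :
    νa'.toFun E = 0 ∧ νna'.toFun E = 0 := by
  have hq : ∀ x, PovmAux.q νa' E x = 0 ∧ PovmAux.q νna' E x = 0 := by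
    intro x
    have h1 := PovmAux.q_add (hsum E hE) x
    rw [PovmAux.q_zero_of_eq_zero h x] at h1
    have h2 := PovmAux.q_nonneg νa' hE x
    have h3 := PovmAux.q_nonneg νna' hE x
    constructor <;> linarith
  exact ⟨PovmAux.eq_zero_of_q_zero νa' hE (fun x => (hq x).1),
    PovmAux.eq_zero_of_q_zero νna' hE (fun x => (hq x).2)⟩

/-- step (a): the nonatomic part of any decomposition vanishes on subsets of `S`. -/
lemma nonatomic_null_on_S {ν νa' νna' : POVM X H}
    (hsum : ∀ E : Set X, MeasurableSet E → ν.toFun E = νa'.toFun E + νna'.toFun E)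
    (hNon : νna'.Nonatomic) {f : ℕ → Set X} (hf : ∀ n, f n = ∅ ∨ MAtom ν (f n))
    {F : Set X} (hF : MeasurableSet F) (hFS : F ⊆ ⋃ n, f n) :
    νna'.toFun F = 0 := by
  have fmeas : ∀ n, MeasurableSet (f n) := fun n => by
    rcases hf n with h | h
    · rw [h]; exact MeasurableSet.empty
    · exact h.1
  have hFeq : F = ⋃ n, F ∩ f n := by
    rw [← Set.inter_iUnion]
    exact (Set.inter_eq_self_of_subset_left hFS).symm
  rw [hFeq]
  apply PovmAux.null_iUnion νna' (fun n => hF.inter (fmeas n))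
  intro n
  rcases hf n with hfn | hAtom
  · rw [hfn, Set.inter_empty]; exact νna'.empty'
  by_contra hne
  apply hNon (F ∩ f n)
  have hCmeas : MeasurableSet (F ∩ f n) := hF.inter (fmeas n)
  refine ⟨hCmeas, hne, fun B hBC hB => ?_⟩
  rcases hAtom.2.2 B (hBC.trans Set.inter_subset_right) hB with h0 | hd
  · exact Or.inl (parts_null hsum hB h0).2
  · right
    have h1 : ν.toFun ((F ∩ f n) \ B) = 0 :=
      PovmAux.null_mono ν ((fmeas n).diff hB) (hCmeas.diff hB)
        (Set.diff_subset_diff_left Set.inter_subset_right) hd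
    have h2 := (parts_null hsum (hCmeas.diff hB) h1).2
    exact (PovmAux.eq_iff_diff_null νna' hCmeas hB hBC).2 h2

/-- step (b): the atomic part of any decomposition vanishes on sets containing no atom of ν. -/
lemma atomic_null_off_S {ν νa' νna' : POVM X H}
    (hsum : ∀ E : Set X, MeasurableSet E → ν.toFun E = νa'.toFun E + νna'.toFun E)
    (hAt : νa'.Atomic) {S : Set X}
    (hmax : ∀ A : Set X, MAtom ν A → ¬ (A ⊆ Sᶜ))
    {F : Set X} (hF : MeasurableSet F) (hFS : F ⊆ Sᶜ) :
    νa'.toFun F = 0 := by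
  by_contra hne
  obtain ⟨A, hAF, hatA⟩ := hAt F hF hne
  obtain ⟨hAmeas, hAne, hatA'⟩ := hatA
  -- the class of "full" subsets of A and the infimum of their ν-sizes
  set P : Set X → Prop := fun B => B ⊆ A ∧ MeasurableSet B ∧ νa'.toFun (A \ B) = 0 with hP
  set D : Set ℝ := {r | ∃ B, P B ∧ m ν B = r} with hD
  have hPA : P A := ⟨Set.Subset.rfl, hAmeas, by rw [Set.diff_self]; exact νa'.empty'⟩
  have hDne : D.Nonempty := ⟨m ν A, A, hPA, rfl⟩
  have hDbdd : BddBelow D := by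
    refine ⟨0, ?_⟩
    rintro r ⟨B, hPB, rfl⟩
    exact m_nonneg ν hPB.2.1
  set δ := sInf D with hδ
  have hpick : ∀ k : ℕ, ∃ B, P B ∧ m ν B < δ + 1/(k+1) := by
    intro k
    have hlt : δ < δ + 1/(k+1) := by
      have : (0:ℝ) < 1/(k+1) := by positivity
      linarith
    obtain ⟨r, ⟨B, hPB, rfl⟩, hr⟩ := exists_lt_of_csInf_lt hDne hlt
    exact ⟨B, hPB, hr⟩
  choose B hPB hmB using hpick
  set Bs := ⋂ k, B k with hBs
  have hBsmeas : MeasurableSet Bs := MeasurableSet.iInter (fun k => (hPB k).2.1)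
  have hBsA : Bs ⊆ A := (Set.iInter_subset B 0).trans (hPB 0).1
  have hdiffnull : νa'.toFun (A \ Bs) = 0 := by
    have heq : A \ Bs = ⋃ k, A \ B k := by
      rw [hBs, Set.diff_iInter]
    rw [heq]
    exact PovmAux.null_iUnion νa' (fun k => hAmeas.diff (hPB k).2.1) (fun k => (hPB k).2.2)
  have hPBs : P Bs := ⟨hBsA, hBsmeas, hdiffnull⟩
  have hδle : δ ≤ m ν Bs := csInf_le hDbdd ⟨Bs, hPBs, rfl⟩
  have hmBsle : m ν Bs ≤ δ := by
    by_contra hc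
    push_neg at hc
    obtain ⟨k, hk⟩ := exists_nat_one_div_lt (sub_pos.2 hc)
    have h1 : m ν Bs ≤ m ν (B k) :=
      m_mono ν (hPB k).2.1 hBsmeas (Set.iInter_subset B k)
    have h2 := hmB k
    push_cast at hk
    linarith
  have hmBs : m ν Bs = δ := le_antisymm hmBsle hδle
  -- νa' Bs ≠ 0 hence ν Bs ≠ 0
  have hνa'Bs : νa'.toFun Bs ≠ 0 := by
    intro h0
    have := PovmAux.diff_eq νa' hAmeas hBsmeas hBsA
    rw [h0, hdiffnull, add_zero] at this
    exact hAne this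
  have hνBs : ν.toFun Bs ≠ 0 := by
    intro h0
    exact hνa'Bs (parts_null hsum hBsmeas h0).1
  -- Bs is an atom of ν contained in Sᶜ : contradiction
  apply hmax Bs _ (hBsA.trans (hAF.trans hFS))
  refine ⟨hBsmeas, hνBs, fun C hCBs hC => ?_⟩
  have hCA : C ⊆ A := hCBs.trans hBsA
  rcases hatA' C hCA hC with h0 | he
  · -- νa' C = 0 : then Bs \ C is still "full", so m ν C = 0 and ν C = 0
    left
    have hkey : νa'.toFun (A \ (Bs \ C)) = 0 := by
      have heq : A \ (Bs \ C) = (A \ Bs) ∪ C := by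
        ext x
        simp only [Set.mem_diff, Set.mem_union]
        constructor
        · rintro ⟨hxA, hx⟩
          by_cases hxC : x ∈ C
          · exact Or.inr hxC
          · exact Or.inl ⟨hxA, fun hxBs => hx ⟨hxBs, hxC⟩⟩
        · rintro (⟨hxA, hxBs⟩ | hxC)
          · exact ⟨hxA, fun h => hxBs h.1⟩
          · exact ⟨hCA hxC, fun h => h.2 hxC⟩
      rw [heq, PovmAux.union_two νa' (hAmeas.diff hBsmeas) hC
        (Set.disjoint_of_subset_right hCBs Set.disjoint_sdiff_left), hdiffnull, h0, add_zero]
    have hPB' : P (Bs \ C) := ⟨(Set.diff_subset).trans hBsA, hBsmeas.diff hC, hkey⟩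
    have h1 : δ ≤ m ν (Bs \ C) := csInf_le hDbdd ⟨Bs \ C, hPB', rfl⟩
    have h2 : m ν Bs = m ν C + m ν (Bs \ C) := m_diff ν hBsmeas hC hCBs
    have h3 : 0 ≤ m ν C := m_nonneg ν hC
    have hmC : m ν C = 0 := by linarith
    exact povm_eq_zero_of_m ν hC hmC
  · -- νa' C = νa' A : then C is "full", so m ν (Bs \ C) = 0 and ν (Bs \ C) = 0
    right
    have hfull : νa'.toFun (A \ C) = 0 := (PovmAux.eq_iff_diff_null νa' hAmeas hC hCA).1 he
    have hPC : P C := ⟨hCA, hC, hfull⟩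
    have h1 : δ ≤ m ν C := csInf_le hDbdd ⟨C, hPC, rfl⟩
    have h2 : m ν Bs = m ν C + m ν (Bs \ C) := m_diff ν hBsmeas hC hCBs
    have h3 : 0 ≤ m ν (Bs \ C) := m_nonneg ν (hBsmeas.diff hC)
    have hmD : m ν (Bs \ C) = 0 := by linarith
    exact povm_eq_zero_of_m ν (hBsmeas.diff hC) hmD

end Main

/-- Every POVM into the bounded operators on a separable Hilbert space can be written
uniquely as the sum of an atomic POVM and a nonatomic POVM. -/
theorem povm_atomic_nonatomic_decomposition {X : Type*} [MeasurableSpace X]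
    {H : Type*} [NormedAddCommGroup H] [InnerProductSpace ℂ H] [CompleteSpace H]
    [TopologicalSpace.SeparableSpace H] (ν : POVM X H) :
    ∃ νa νna : POVM X H, νa.Atomic ∧ νna.Nonatomic ∧
      (∀ E : Set X, MeasurableSet E → ν.toFun E = νa.toFun E + νna.toFun E) ∧
      ∀ νa' νna' : POVM X H, νa'.Atomic → νna'.Nonatomic →
        (∀ E : Set X, MeasurableSet E → ν.toFun E = νa'.toFun E + νna'.toFun E) →
        ∀ E : Set X, MeasurableSet E → νa'.toFun E = νa.toFun E ∧ νna'.toFun E = νna.toFun E := by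
  classical
  obtain ⟨S, f, hf, hSf, hmax⟩ := exists_S ν
  have fmeas : ∀ n, MeasurableSet (f n) := fun n => by
    rcases hf n with h | h
    · rw [h]; exact MeasurableSet.empty
    · exact h.1
  have hSmeas : MeasurableSet S := by rw [hSf]; exact MeasurableSet.iUnion fmeas
  have hdecomp : ∀ E : Set X, MeasurableSet E →
      ν.toFun E = (restrict ν S hSmeas).toFun E + (restrict ν Sᶜ hSmeas.compl).toFun E := by
    intro E hE
    rw [restrict_apply, restrict_apply]
    have hu := PovmAux.union_two ν (hE.inter hSmeas) (hE.inter hSmeas.compl)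
      (Disjoint.mono Set.inter_subset_right Set.inter_subset_right disjoint_compl_right)
    rwa [Set.inter_union_compl] at hu
  refine ⟨restrict ν S hSmeas, restrict ν Sᶜ hSmeas.compl, ?_, ?_, hdecomp, ?_⟩
  · -- atomic
    intro E hE hne
    rw [restrict_apply] at hne
    have hESmeas : MeasurableSet (E ∩ S) := hE.inter hSmeas
    have hex : ∃ n, ν.toFun ((E ∩ S) ∩ f n) ≠ 0 := by
      by_contra hall
      push_neg at hall
      apply hne
      have heq : ⋃ n, (E ∩ S) ∩ f n = E ∩ S := by
        rw [← Set.inter_iUnion, ← hSf, Set.inter_assoc]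
        conv_rhs => rw [hSf]
        rw [← hSf, Set.inter_self]
      have := PovmAux.null_iUnion ν (fun n => hESmeas.inter (fmeas n)) hall
      rwa [heq] at this
    obtain ⟨n, hn⟩ := hex
    have hAtom : MAtom ν (f n) := by
      rcases hf n with h | h
      · rw [h, Set.inter_empty] at hn
        exact absurd ν.empty' hn
      · exact h
    set A := (E ∩ S) ∩ f n with hAdef
    have hAmeas : MeasurableSet A := hESmeas.inter (fmeas n)
    have hfnS : f n ⊆ S := by rw [hSf]; exact Set.subset_iUnion f n
    have hAS : A ⊆ S := Set.inter_subset_right.trans hfnS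
    have hAatom : MAtom ν A := mAtom_subset hAtom Set.inter_subset_right hAmeas hn
    have hIs : ν.IsAtomOf A := (isAtomOf_iff_mAtom ν A).2 hAatom
    refine ⟨A, Set.inter_subset_left.trans Set.inter_subset_left, hAmeas, ?_, ?_⟩
    · rw [restrict_eq_of_subset ν hSmeas hAS]
      exact hAatom.2.1
    · intro B hBA hB
      rw [restrict_eq_of_subset ν hSmeas (hBA.trans hAS), restrict_eq_of_subset ν hSmeas hAS]
      exact hIs.2.2 B hBA hB
  · -- nonatomic
    rintro A ⟨hAmeas, hne, hsub⟩
    rw [restrict_apply] at hne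
    apply hmax (A ∩ Sᶜ) _ Set.inter_subset_right
    have hCmeas : MeasurableSet (A ∩ Sᶜ) := hAmeas.inter hSmeas.compl
    refine ⟨hCmeas, hne, fun B hBC hB => ?_⟩
    have hBA : B ⊆ A := hBC.trans Set.inter_subset_left
    have hBSc : B ⊆ Sᶜ := hBC.trans Set.inter_subset_right
    have hBr : (restrict ν Sᶜ hSmeas.compl).toFun B = ν.toFun B :=
      restrict_eq_of_subset ν hSmeas.compl hBSc
    rcases hsub B hBA hB with h0 | he
    · left
      rw [← hBr]
      exact h0
    · right
      have he' : ν.toFun B = ν.toFun (A ∩ Sᶜ) := by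
        rw [← hBr, he, restrict_apply]
      exact (PovmAux.eq_iff_diff_null ν hCmeas hB hBC).1 he'
  · -- uniqueness
    intro νa' νna' hAt' hNon' hsum' E hE
    have ha_null : ∀ F : Set X, MeasurableSet F → F ⊆ Sᶜ → νa'.toFun F = 0 :=
      fun F hF hFS => atomic_null_off_S hsum' hAt' hmax hF hFS
    have hna_null : ∀ F : Set X, MeasurableSet F → F ⊆ S → νna'.toFun F = 0 := by
      intro F hF hFS
      exact nonatomic_null_on_S hsum' hNon' hf hF (by rw [← hSf]; exact hFS)
    have h1 : νa'.toFun E = νa'.toFun (E ∩ S) := by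
      have hu := PovmAux.union_two νa' (hE.inter hSmeas) (hE.inter hSmeas.compl)
        (Disjoint.mono Set.inter_subset_right Set.inter_subset_right disjoint_compl_right)
      rw [Set.inter_union_compl] at hu
      rw [hu, ha_null (E ∩ Sᶜ) (hE.inter hSmeas.compl) Set.inter_subset_right, add_zero]
    have h2 : ν.toFun (E ∩ S) = νa'.toFun (E ∩ S) := by
      have h3 := hsum' (E ∩ S) (hE.inter hSmeas)
      rwa [hna_null (E ∩ S) (hE.inter hSmeas) Set.inter_subset_right, add_zero] at h3
    have hEq : νa'.toFun E = (restrict ν S hSmeas).toFun E := by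
      rw [h1, ← h2, restrict_apply]
    refine ⟨hEq, ?_⟩
    have hd := hsum' E hE
    have hd2 := hdecomp E hE
    rw [hEq] at hd
    exact add_left_cancel (hd.symm.trans hd2)
end
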